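/- arXiv:1710.08552 — 5 statements merged into one kernel-verified Lean document; each statement's English description precedes it below -/
import Mathlib

section
/- Let 1 < α < 2 and d ≥ 2. There exists a constant c > 0, depending only on α and d, such that for all ξ, σ ∈ ℝ^d with ξ ≠ 0 and σ ≠ 0, one has ‖ ‖ξ‖^(α−2)·ξ − ‖σ‖^(α−2)·σ ‖ ≥ c · min( ‖σ‖^(α−1), ‖ξ−σ‖ · ‖σ‖^(α−2) ). -/
open scoped RealInnerProductSpace

private lemma bern_aux (β : ℝ) (hβ0 : 0 ≤ β) (hβ1 : β ≤ 1) {x : ℝ} (hx : 0 ≤ x) :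
    x ^ β ≤ 1 + β * (x - 1) := by
  have := rpow_one_add_le_one_add_mul_self (s := x - 1) (by linarith) hβ0 hβ1
  simpa using this

private lemma scaled_bern (β a b : ℝ) (hβ0 : 0 ≤ β) (hβ1 : β ≤ 1) (ha : 0 ≤ a) (hb : 0 < b) :
    a ^ β ≤ b ^ β + β * b ^ (β - 1) * (a - b) := by
  have h := bern_aux β hβ0 hβ1 (div_nonneg ha hb.le)
  rw [Real.div_rpow ha hb.le] at h
  have hbβ : 0 < b ^ β := Real.rpow_pos_of_pos hb β
  have hb1 : b ^ (β - 1) = b ^ β / b := by rw [Real.rpow_sub hb, Real.rpow_one]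
  have h2 := mul_le_mul_of_nonneg_right h hbβ.le
  have hne : b ^ β ≠ 0 := hbβ.ne'
  calc a ^ β = a ^ β / b ^ β * b ^ β := by field_simp
    _ ≤ (1 + β * (a / b - 1)) * b ^ β := h2
    _ = b ^ β + β * (b ^ β / b) * (a - b) := by field_simp
    _ = b ^ β + β * b ^ (β - 1) * (a - b) := by rw [hb1]

private lemma half_le_two_rpow (β : ℝ) (hβ0 : 0 ≤ β) (hβ1 : β ≤ 1) : (1/2 : ℝ) ≤ (2:ℝ) ^ (β - 1) := by
  have h : (2:ℝ) ^ (-1 : ℝ) ≤ (2:ℝ) ^ (β - 1) :=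
    Real.rpow_le_rpow_of_exponent_le one_le_two (by linarith)
  rw [Real.rpow_neg_one] at h
  linarith [h]

private lemma poly_key (β a b p u v A B : ℝ) (hβ0 : 0 < β) (hβ1 : β < 1)
    (ha : 0 < a) (hb : 0 < b) (hp : p ≤ a * b)
    (hA : 0 < A) (hB : 0 < B) (hu : u = a * A) (hv : v = b * B)
    (h1 : u ≤ v + β * B * (a - b))
    (h2 : v ≤ u + β * A * (b - a))
    (hAB : a ≤ 2 * b → B ≤ 2 * A)
    (h3 : 2 * b ≤ a → v + β / 2 * v ≤ u) :
    β ^ 2 / 9 * min (v ^ 2) ((a ^ 2 + b ^ 2 - 2 * p) * B ^ 2)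
      ≤ u ^ 2 + v ^ 2 - 2 * (A * B * p) := by
  have hq : 0 ≤ a * b - p := by linarith
  have hvpos : 0 < v := by rw [hv]; positivity
  have hkey : u ^ 2 + v ^ 2 - 2 * (A * B * p) = (u - v) ^ 2 + 2 * (A * B) * (a * b - p) := by
    rw [hu, hv]; ring
  have hβsq : β ^ 2 ≤ 1 := by nlinarith
  rcases le_total a (2 * b) with hc | hc
  · have hmin : min (v ^ 2) ((a ^ 2 + b ^ 2 - 2 * p) * B ^ 2)
        ≤ (a ^ 2 + b ^ 2 - 2 * p) * B ^ 2 := min_le_right _ _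
    have hA2 : B ≤ 2 * A := hAB hc
    have hsq : β ^ 2 / 4 * B ^ 2 * (a - b) ^ 2 ≤ (u - v) ^ 2 := by
      rcases le_total a b with h | h
      · have h1' : β * B * (b - a) ≤ v - u := by linarith
        have hnn : 0 ≤ β * B * (b - a) := by
          apply mul_nonneg (mul_nonneg hβ0.le hB.le); linarith
        have := pow_le_pow_left₀ hnn h1' 2
        nlinarith [sq_nonneg (β * B * (a - b))]
      · have h2' : β * A * (a - b) ≤ u - v := by linarith
        have hnn : 0 ≤ β * A * (a - b) := by
          apply mul_nonneg (mul_nonneg hβ0.le hA.le); linarith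
        have := pow_le_pow_left₀ hnn h2' 2
        nlinarith [this, mul_nonneg (sq_nonneg (β * (a - b)))
          (mul_nonneg (sub_nonneg.mpr hA2) (by positivity : (0:ℝ) ≤ 2 * A + B))]
    have t1 : B ^ 2 * (a * b - p) ≤ 2 * (A * B) * (a * b - p) := by
      apply mul_le_mul_of_nonneg_right _ hq
      nlinarith [mul_le_mul_of_nonneg_right hA2 hB.le]
    calc β ^ 2 / 9 * min (v ^ 2) ((a ^ 2 + b ^ 2 - 2 * p) * B ^ 2)
        ≤ β ^ 2 / 9 * ((a ^ 2 + b ^ 2 - 2 * p) * B ^ 2) := by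
          apply mul_le_mul_of_nonneg_left hmin; positivity
      _ ≤ u ^ 2 + v ^ 2 - 2 * (A * B * p) := by
          rw [hkey]
          have X1 : 0 ≤ (1 - β ^ 2) * ((a * b - p) * B ^ 2) :=
            mul_nonneg (by linarith) (mul_nonneg hq (sq_nonneg B))
          have X2 : 0 ≤ β ^ 2 * (B * (a - b)) ^ 2 := by positivity
          have X3 : 0 ≤ β ^ 2 * ((a * b - p) * B ^ 2) := by
            apply mul_nonneg (sq_nonneg β) (mul_nonneg hq (sq_nonneg B))
          linarith [hsq, t1, X1, X2, X3]
  · have hmin : min (v ^ 2) ((a ^ 2 + b ^ 2 - 2 * p) * B ^ 2) ≤ v ^ 2 := min_le_left _ _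
    have h3' : β / 2 * v ≤ u - v := by linarith [h3 hc]
    have hnn : 0 ≤ β / 2 * v := by positivity
    have hsq := pow_le_pow_left₀ hnn h3' 2
    have hAB0 : 0 ≤ 2 * (A * B) * (a * b - p) := by
      apply mul_nonneg _ hq; positivity
    calc β ^ 2 / 9 * min (v ^ 2) ((a ^ 2 + b ^ 2 - 2 * p) * B ^ 2)
        ≤ β ^ 2 / 9 * v ^ 2 := by apply mul_le_mul_of_nonneg_left hmin; positivity
      _ ≤ u ^ 2 + v ^ 2 - 2 * (A * B * p) := by
          rw [hkey]
          have X2 : 0 ≤ β ^ 2 * v ^ 2 := by positivity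
          linarith [hsq, hAB0, X2]

private lemma sq_key (β a b p : ℝ) (hβ0 : 0 < β) (hβ1 : β < 1) (ha : 0 < a) (hb : 0 < b)
    (hp : p ≤ a * b) :
    β ^ 2 / 9 * min ((b ^ β) ^ 2) ((a ^ 2 + b ^ 2 - 2 * p) * (b ^ (β - 1)) ^ 2)
      ≤ (a ^ β) ^ 2 + (b ^ β) ^ 2 - 2 * (a ^ (β - 1) * b ^ (β - 1) * p) := by
  have hA : 0 < a ^ (β - 1) := Real.rpow_pos_of_pos ha _
  have hB : 0 < b ^ (β - 1) := Real.rpow_pos_of_pos hb _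
  have hsplit : ∀ x : ℝ, 0 < x → x ^ β = x * x ^ (β - 1) := by
    intro x hx
    rw [show β = 1 + (β - 1) by ring]
    rw [Real.rpow_add hx, Real.rpow_one]
    ring_nf
  have h2r : (1/2 : ℝ) ≤ (2:ℝ) ^ (β - 1) := half_le_two_rpow β hβ0.le hβ1.le
  apply poly_key β a b p (a ^ β) (b ^ β) (a ^ (β - 1)) (b ^ (β - 1)) hβ0 hβ1 ha hb hp hA hB
    (hsplit a ha) (hsplit b hb)
  · have := scaled_bern β a b hβ0.le hβ1.le ha.le hb
    linarith
  · have := scaled_bern β b a hβ0.le hβ1.le hb.le ha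
    linarith
  · intro hc
    have h1 : (2 * b) ^ (β - 1) ≤ a ^ (β - 1) :=
      Real.rpow_le_rpow_of_nonpos ha hc (by linarith)
    rw [Real.mul_rpow (by norm_num) hb.le] at h1
    nlinarith
  · intro hc
    have h1 : (2 * b) ^ β ≤ a ^ β := Real.rpow_le_rpow (by positivity) hc hβ0.le
    rw [Real.mul_rpow (by norm_num) hb.le] at h1
    have h2 : (1 : ℝ) ≤ (2:ℝ) ^ β + β * (2:ℝ) ^ (β - 1) * (1 - 2) := by
      have := scaled_bern β 1 2 hβ0.le hβ1.le zero_le_one two_pos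
      simpa using this
    have h3 : 1 + β / 2 ≤ (2:ℝ) ^ β := by nlinarith
    have hvβ : 0 < b ^ β := Real.rpow_pos_of_pos hb _
    nlinarith

/-- Lemma 6.3: lower bound for the difference of the gradient of the phase. -/
theorem stmt_0 (α : ℝ) (hα₁ : 1 < α) (hα₂ : α < 2) (d : ℕ) (hd : 2 ≤ d) :
    ∃ c : ℝ, 0 < c ∧
      ∀ ξ σ : EuclideanSpace ℝ (Fin d), ξ ≠ 0 → σ ≠ 0 →
        c * min (‖σ‖ ^ (α - 1)) (‖ξ - σ‖ * ‖σ‖ ^ (α - 2)) ≤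
          ‖(‖ξ‖ ^ (α - 2)) • ξ - (‖σ‖ ^ (α - 2)) • σ‖ := by
  refine ⟨(α - 1) / 3, by linarith, ?_⟩
  intro ξ σ hξ hσ
  have ha : (0:ℝ) < ‖ξ‖ := norm_pos_iff.mpr hξ
  have hb : (0:ℝ) < ‖σ‖ := norm_pos_iff.mpr hσ
  set a := ‖ξ‖ with ha_def
  set b := ‖σ‖ with hb_def
  set p := (inner ℝ ξ σ : ℝ) with hp_def
  have hp : p ≤ a * b := real_inner_le_norm ξ σ
  have key := sq_key (α - 1) a b p (by linarith) (by linarith) ha hb hp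
  rw [show α - 1 - 1 = α - 2 by ring] at key
  have hA : 0 < a ^ (α - 2) := Real.rpow_pos_of_pos ha _
  have hB : 0 < b ^ (α - 2) := Real.rpow_pos_of_pos hb _
  apply le_of_pow_le_pow_left₀ (n := 2) two_ne_zero (norm_nonneg _)
  rw [norm_sub_sq_real]
  have hXn : ‖(a ^ (α - 2)) • ξ‖ = a ^ (α - 2) * a := by
    rw [norm_smul, Real.norm_eq_abs, abs_of_pos hA]
  have hYn : ‖(b ^ (α - 2)) • σ‖ = b ^ (α - 2) * b := by
    rw [norm_smul, Real.norm_eq_abs, abs_of_pos hB]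
  have hin : ⟪(a ^ (α - 2)) • ξ, (b ^ (α - 2)) • σ⟫ = a ^ (α - 2) * (b ^ (α - 2) * p) := by
    rw [real_inner_smul_left, real_inner_smul_right]
  rw [hXn, hYn, hin]
  have hax : a ^ (α - 2) * a = a ^ (α - 1) := by
    rw [show α - 1 = (α - 2) + 1 by ring, Real.rpow_add ha, Real.rpow_one]
  have hbx : b ^ (α - 2) * b = b ^ (α - 1) := by
    rw [show α - 1 = (α - 2) + 1 by ring, Real.rpow_add hb, Real.rpow_one]
  rw [hax, hbx]
  have hL2 : (‖ξ - σ‖ * b ^ (α - 2)) ^ 2 = (a ^ 2 + b ^ 2 - 2 * p) * (b ^ (α - 2)) ^ 2 := by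
    rw [mul_pow, norm_sub_sq_real]; ring
  have hminsq : (min (b ^ (α - 1)) (‖ξ - σ‖ * b ^ (α - 2))) ^ 2
      = min ((b ^ (α - 1)) ^ 2) ((a ^ 2 + b ^ 2 - 2 * p) * (b ^ (α - 2)) ^ 2) := by
    have hvβ : (0:ℝ) ≤ b ^ (α - 1) := (Real.rpow_pos_of_pos hb _).le
    have hLn : (0:ℝ) ≤ ‖ξ - σ‖ * b ^ (α - 2) := by positivity
    rcases le_total (b ^ (α - 1)) (‖ξ - σ‖ * b ^ (α - 2)) with h | h
    · rw [min_eq_left h, min_eq_left]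
      rw [← hL2]; exact pow_le_pow_left₀ hvβ h 2
    · rw [min_eq_right h, min_eq_right, hL2]
      rw [← hL2]; exact pow_le_pow_left₀ hLn h 2
  rw [mul_pow, hminsq]
  refine le_trans (le_of_eq ?_) (key.trans (le_of_eq ?_))
  · ring
  · ring
end

section
/- Let 1 < α < 2 and d ≥ 1. There exists a constant C > 0 depending only on α (and d) such that for all ξ, η ∈ ℝ^d with ξ ≠ 0, | ‖ξ+η‖^α − ‖ξ‖^α − α·‖ξ‖^(α−2)·⟨ξ,η⟩ | ≤ C·‖η‖^α. -/
open scoped RealInnerProductSpace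
open Real

private lemma bern_aux_s3 {p x y : ℝ} (hp0 : 0 ≤ p) (hp1 : p ≤ 1) (hx : 0 ≤ x) (hy : 0 < y) :
    x ^ p ≤ y ^ p + p * y ^ (p - 1) * (x - y) := by
  have hs : (-1 : ℝ) ≤ x / y - 1 := by
    have : 0 ≤ x / y := div_nonneg hx hy.le
    linarith
  have h := rpow_one_add_le_one_add_mul_self hs hp0 hp1
  have he : (1 + (x / y - 1)) = x / y := by ring
  rw [he] at h
  have hyp : (0:ℝ) < y ^ p := rpow_pos_of_pos hy p
  have h2 : (x / y) ^ p * y ^ p ≤ (1 + p * (x / y - 1)) * y ^ p :=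
    mul_le_mul_of_nonneg_right h hyp.le
  rw [div_rpow hx hy.le, div_mul_cancel₀ _ hyp.ne'] at h2
  calc x ^ p ≤ (1 + p * (x / y - 1)) * y ^ p := h2
    _ = y ^ p + p * y ^ (p - 1) * (x - y) := by
      rw [rpow_sub hy, rpow_one]
      field_simp

private lemma mvt_rpow {β m x y : ℝ} (hβ : β < 0) (hm : 0 < m) (hx : m ≤ x) (hy : m ≤ y) :
    |x ^ β - y ^ β| ≤ |β| * m ^ (β - 1) * |x - y| := by
  have hderiv : ∀ z ∈ Set.Ici m, HasDerivWithinAt (fun t : ℝ => t ^ β)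
      (β * z ^ (β - 1)) (Set.Ici m) z := fun z hz =>
    (Real.hasDerivAt_rpow_const (Or.inl (hm.trans_le hz).ne')).hasDerivWithinAt
  have hbound : ∀ z ∈ Set.Ici m, ‖β * z ^ (β - 1)‖ ≤ |β| * m ^ (β - 1) := by
    intro z hz
    rw [norm_mul, Real.norm_eq_abs, Real.norm_eq_abs,
      abs_of_nonneg (rpow_nonneg (hm.trans_le hz).le _)]
    refine mul_le_mul_of_nonneg_left ?_ (abs_nonneg β)
    exact Real.rpow_le_rpow_of_nonpos hm hz (by linarith)
  have := Convex.norm_image_sub_le_of_norm_hasDerivWithin_le hderiv hbound (convex_Ici m) hy hx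
  simpa [Real.norm_eq_abs] using this
private lemma rpow_two_eq (x : ℝ) : x ^ (2:ℝ) = x ^ 2 := by
  rw [show (2:ℝ) = ((2:ℕ):ℝ) by norm_num, Real.rpow_natCast]

set_option maxHeartbeats 2000000 in
private lemma scalar_key {α a b c s : ℝ} (hα₁ : 1 < α) (hα₂ : α < 2)
    (ha : 0 < a) (hb : 0 ≤ b) (hc : 0 ≤ c) (hs : |s| ≤ a * b)
    (hsq : c ^ 2 = a ^ 2 + 2 * s + b ^ 2) :
    |c ^ α - a ^ α - α * a ^ (α - 2) * s| ≤ 100 * b ^ α := by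
  have hα0 : 0 < α := by linarith
  obtain ⟨hs1, hs2⟩ := abs_le.mp hs
  rcases eq_or_lt_of_le hb with hb0 | hb0
  · -- b = 0
    have hs0 : s = 0 := by
      have h0 : |s| ≤ 0 := by rw [← hb0, mul_zero] at hs; exact hs
      exact abs_eq_zero.mp (le_antisymm h0 (abs_nonneg s))
    have hca : c = a := by
      have h2 : c ^ 2 = a ^ 2 := by rw [hsq, hs0, ← hb0]; ring
      calc c = Real.sqrt (c ^ 2) := (Real.sqrt_sq hc).symm
        _ = Real.sqrt (a ^ 2) := by rw [h2]
        _ = a := Real.sqrt_sq ha.le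
    rw [hca, hs0, ← hb0]
    simp [Real.zero_rpow hα0.ne']
  have hbα : 0 < b ^ α := rpow_pos_of_pos hb0 α
  have hcab : c ≤ a + b := by
    have hexp : (a + b) ^ 2 = a ^ 2 + 2 * (a * b) + b ^ 2 := by ring
    have h2 : c ^ 2 ≤ (a + b) ^ 2 := by linarith only [hsq, hs2, hexp]
    exact (pow_le_pow_iff_left₀ hc (by linarith) two_ne_zero).mp h2
  rcases lt_or_ge a (2 * b) with hfar | hnear
  · -- far case : a < 2b
    have h9 : (3:ℝ) ^ α ≤ 9 := by
      have h := rpow_le_rpow_of_exponent_le (by norm_num : (1:ℝ) ≤ 3) hα₂.le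
      rw [rpow_two_eq] at h; linarith
    have h4 : (2:ℝ) ^ α ≤ 4 := by
      have h := rpow_le_rpow_of_exponent_le (by norm_num : (1:ℝ) ≤ 2) hα₂.le
      rw [rpow_two_eq] at h; linarith
    have h2' : (2:ℝ) ^ (α - 1) ≤ 2 := by
      have h := rpow_le_rpow_of_exponent_le (by norm_num : (1:ℝ) ≤ 2) (by linarith : α - 1 ≤ 1)
      rwa [Real.rpow_one] at h
    have hcα : c ^ α ≤ 9 * b ^ α := by
      calc c ^ α ≤ (3 * b) ^ α := rpow_le_rpow hc (by linarith) hα0.le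
        _ = 3 ^ α * b ^ α := mul_rpow (by norm_num) hb
        _ ≤ 9 * b ^ α := mul_le_mul_of_nonneg_right h9 hbα.le
    have haα : a ^ α ≤ 4 * b ^ α := by
      calc a ^ α ≤ (2 * b) ^ α := rpow_le_rpow ha.le hfar.le hα0.le
        _ = 2 ^ α * b ^ α := mul_rpow (by norm_num) hb
        _ ≤ 4 * b ^ α := mul_le_mul_of_nonneg_right h4 hbα.le
    have hlin : α * a ^ (α - 2) * |s| ≤ 4 * b ^ α := by
      have ha2 : (0:ℝ) < a ^ (α - 2) := rpow_pos_of_pos ha _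
      have e1 : a ^ (α - 2) * (a * b) = a ^ (α - 1) * b := by
        rw [show a ^ (α - 1) = a ^ (α - 2) * a from by
          rw [← Real.rpow_add_one ha.ne']; congr 1; ring]
        ring
      have e2 : a ^ (α - 1) ≤ 2 ^ (α-1) * b ^ (α-1) := by
        calc a ^ (α-1) ≤ (2*b) ^ (α-1) := rpow_le_rpow ha.le hfar.le (by linarith)
          _ = 2 ^ (α-1) * b ^ (α-1) := mul_rpow (by norm_num) hb
      have e3 : b ^ (α - 1) * b = b ^ α := by
        rw [← Real.rpow_add_one hb0.ne']; congr 1; ring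
      have hb1 : 0 ≤ b ^ (α - 1) := rpow_nonneg hb _
      calc α * a ^ (α-2) * |s| = α * (a ^ (α-2) * |s|) := by ring
        _ ≤ 2 * (a ^ (α-2) * |s|) := by
            have h2 : 0 ≤ a ^ (α-2) * |s| := mul_nonneg ha2.le (abs_nonneg s)
            exact mul_le_mul_of_nonneg_right (by linarith only [hα₂]) h2
        _ ≤ 2 * (a ^ (α-2) * (a*b)) := by
            have h1 := mul_le_mul_of_nonneg_left hs ha2.le
            linarith only [h1]
        _ = 2 * (a ^ (α-1) * b) := by rw [e1]
        _ ≤ 2 * ((2 ^ (α-1) * b ^ (α-1)) * b) := by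
            have := mul_le_mul_of_nonneg_right e2 hb0.le
            linarith
        _ ≤ 2 * ((2 * b ^ (α-1)) * b) := by
            have hmm := mul_le_mul_of_nonneg_right
              (mul_le_mul_of_nonneg_right h2' hb1) hb0.le
            linarith only [hmm]
        _ = 4 * (b ^ (α-1) * b) := by ring
        _ = 4 * b ^ α := by rw [e3]
    have hcα0 : 0 ≤ c ^ α := rpow_nonneg hc _
    have haα0 : 0 ≤ a ^ α := rpow_nonneg ha.le _
    have htri : |c ^ α - a ^ α - α * a ^ (α - 2) * s| ≤ c ^ α + a ^ α + α * a ^ (α-2) * |s| := by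
      have h1 : |α * a ^ (α-2) * s| = α * a ^ (α-2) * |s| := by
        rw [abs_mul, abs_mul, abs_of_pos hα0, abs_of_pos (rpow_pos_of_pos ha _)]
      calc |c ^ α - a ^ α - α * a ^ (α - 2) * s|
          ≤ |c ^ α - a ^ α| + |α * a ^ (α-2) * s| := abs_sub _ _
        _ ≤ (|c ^ α| + |a ^ α|) + α * a ^ (α-2) * |s| := by
            rw [h1]; exact add_le_add (abs_sub _ _) le_rfl
        _ = c ^ α + a ^ α + α * a ^ (α-2) * |s| := by
            rw [abs_of_nonneg hcα0, abs_of_nonneg haα0]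
    linarith
  · -- near case : 2 * b ≤ a
    have hp0 : (0:ℝ) < α / 2 := by linarith
    have hphalf : (1:ℝ)/2 < α / 2 := by linarith
    have hp1 : α / 2 < 1 := by linarith
    set p : ℝ := α / 2 with hp
    clear_value p
    have hv : (0:ℝ) < a ^ 2 := by positivity
    have hba : b ≤ a := by linarith
    have hclo : a / 2 ≤ c := by
      have hab0' : (0:ℝ) ≤ a - b := by linarith
      have hexp : (a - b) ^ 2 = a ^ 2 - 2 * (a * b) + b ^ 2 := by ring
      have habs : -(a * b) ≤ s := hs1
      have h2 : (a - b) ^ 2 ≤ c ^ 2 := by linarith only [hsq, habs, hexp]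
      have h3 : a - b ≤ c := (pow_le_pow_iff_left₀ hab0' hc two_ne_zero).mp h2
      linarith
    have hu_lo : a ^ 2 / 4 ≤ c ^ 2 := by
      have h2 : (a / 2) ^ 2 ≤ c ^ 2 := pow_le_pow_left₀ (by linarith) hclo 2
      have hexp : (a / 2) ^ 2 = a ^ 2 / 4 := by ring
      linarith only [h2, hexp]
    have hm : (0:ℝ) < a ^ 2 / 4 := by positivity
    have hu_pos : (0:ℝ) < c ^ 2 := lt_of_lt_of_le hm hu_lo
    set u : ℝ := c ^ 2 with hu_def
    set v : ℝ := a ^ 2 with hv_def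
    set h : ℝ := 2 * s + b ^ 2 with hh_def
    clear_value u v h
    have huv : u = v + h := by rw [hh_def]; linarith only [hsq]
    have hbb : b * b ≤ a * b := mul_le_mul_of_nonneg_right hba hb0.le
    have hb2 : b ^ 2 = b * b := sq b
    have hab0 : (0:ℝ) ≤ a * b := mul_nonneg ha.le hb0.le
    have hhabs : |h| ≤ 3 * (a * b) := by
      rw [abs_le, hh_def]
      constructor
      · linarith only [hs1, sq_nonneg b, hab0]
      · linarith only [hs2, hbb, hb2]
    have idc : u ^ p = c ^ α := by
      rw [hu_def, ← rpow_two_eq, ← Real.rpow_mul hc]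
      congr 1; rw [hp]; ring
    have ida : v ^ p = a ^ α := by
      rw [hv_def, ← rpow_two_eq, ← Real.rpow_mul ha.le]
      congr 1; rw [hp]; ring
    have ida2 : v ^ (p - 1) = a ^ (α - 2) := by
      rw [hv_def, ← rpow_two_eq, ← Real.rpow_mul ha.le]
      congr 1; rw [hp]; ring
    have hv1pos : (0:ℝ) < v ^ (p-1) := rpow_pos_of_pos hv _
    have hv2pos : (0:ℝ) < v ^ (p-2) := rpow_pos_of_pos hv _
    have habs2 : (0:ℝ) ≤ |h| * |h| := mul_nonneg (abs_nonneg _) (abs_nonneg _)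
    -- Bernoulli upper bound (concavity)
    have hB1 := bern_aux_s3 hp0.le hp1.le hu_pos.le hv
    rw [show u - v = h by linarith only [huv]] at hB1
    have hub : u ^ p - v ^ p - p * v ^ (p-1) * h ≤ 0 := by linarith only [hB1]
    -- Bernoulli with roles swapped
    have hB2 := bern_aux_s3 hp0.le hp1.le hv.le hu_pos
    rw [show v - u = -h by linarith only [huv]] at hB2
    have hneg : p * u ^ (p-1) * (-h) = -(p * u ^ (p-1) * h) := by ring
    rw [hneg] at hB2
    have hlb : p * (u ^ (p-1) - v ^ (p-1)) * h ≤ u ^ p - v ^ p - p * v ^ (p-1) * h := by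
      have expand : p * (u ^ (p-1) - v ^ (p-1)) * h
          = p * u ^ (p-1) * h - p * v ^ (p-1) * h := by ring
      linarith only [hB2, expand]
    -- MVT bound on the derivative difference
    have hmvt := mvt_rpow (show p - 1 < 0 by linarith only [hp1]) hm hu_lo
      (by linarith only [hm, hv] : v / 4 ≤ v)
    rw [show u - v = h by linarith only [huv],
      abs_of_neg (show p - 1 < 0 by linarith only [hp1]),
      show p - 1 - 1 = p - 2 by ring, neg_sub] at hmvt
    have hΔh : |p * (u ^ (p-1) - v ^ (p-1)) * h|
        ≤ p * ((1 - p) * (v / 4) ^ (p-2) * |h|) * |h| := by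
      rw [abs_mul, abs_mul, abs_of_pos hp0]
      exact mul_le_mul_of_nonneg_right
        (mul_le_mul_of_nonneg_left hmvt hp0.le) (abs_nonneg h)
    have hRabs : |u ^ p - v ^ p - p * v ^ (p-1) * h|
        ≤ p * ((1 - p) * (v / 4) ^ (p-2) * |h|) * |h| := by
      rw [abs_of_nonpos hub]
      have h1 := neg_abs_le (p * (u ^ (p-1) - v ^ (p-1)) * h)
      linarith only [h1, hΔh, hlb]
    -- numeric estimates
    have e4 : (v / 4) ^ (p-2) = v ^ (p-2) * ((4:ℝ) ^ (p-2))⁻¹ := by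
      rw [div_rpow hv.le (by norm_num), div_eq_mul_inv]
    have e5 : ((4:ℝ) ^ (p-2))⁻¹ = (4:ℝ) ^ (2-p) := by
      rw [← Real.rpow_neg (by norm_num)]; congr 1; ring
    have e6 : (4:ℝ) ^ (2-p) ≤ 16 := by
      have h6 := rpow_le_rpow_of_exponent_le (by norm_num : (1:ℝ) ≤ 4)
        (by linarith only [hp0] : 2 - p ≤ 2)
      rw [rpow_two_eq] at h6
      norm_num at h6
      exact h6
    have e7 : v ^ (p-2) * v = v ^ (p-1) := by
      nth_rewrite 2 [← Real.rpow_one v]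
      rw [← Real.rpow_add hv]; congr 1; ring
    have hh2 : |h| * |h| ≤ 9 * (v * b ^ 2) := by
      have hmm := mul_le_mul hhabs hhabs (abs_nonneg h)
        (by linarith only [hab0] : (0:ℝ) ≤ 3 * (a * b))
      rw [hv_def]
      calc |h| * |h| ≤ 3 * (a * b) * (3 * (a * b)) := hmm
        _ = 9 * (a ^ 2 * b ^ 2) := by ring
    have hRfinal : |u ^ p - v ^ p - p * v ^ (p-1) * h|
        ≤ 72 * (v ^ (p-1) * b ^ 2) := by
      have step : p * ((1 - p) * (v / 4) ^ (p-2) * |h|) * |h|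
          = p * (1 - p) * ((v / 4) ^ (p-2) * (|h| * |h|)) := by ring
      have b1 : (v / 4) ^ (p-2) * (|h| * |h|)
          ≤ (16 * v ^ (p-2)) * (9 * (v * b ^ 2)) := by
        rw [e4, e5]
        calc v ^ (p-2) * (4:ℝ) ^ (2-p) * (|h| * |h|)
            ≤ v ^ (p-2) * 16 * (|h| * |h|) := by
              have := mul_le_mul_of_nonneg_left e6 hv2pos.le
              exact mul_le_mul_of_nonneg_right this habs2
          _ ≤ v ^ (p-2) * 16 * (9 * (v * b ^ 2)) := by
              have h16 : (0:ℝ) ≤ v ^ (p-2) * 16 := by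
                have := hv2pos.le; linarith only [this]
              exact mul_le_mul_of_nonneg_left hh2 h16
          _ = (16 * v ^ (p-2)) * (9 * (v * b ^ 2)) := by ring
      have b2 : p * (1 - p) ≤ 1 / 2 := by
        have hmm := mul_le_mul hp1.le (show 1 - p ≤ 1/2 by linarith only [hphalf])
          (by linarith only [hp1]) zero_le_one
        linarith only [hmm]
      have b3 : (0:ℝ) ≤ p * (1 - p) :=
        mul_nonneg hp0.le (by linarith only [hp1])
      have hq : (0:ℝ) ≤ (v / 4) ^ (p-2) * (|h| * |h|) :=
        mul_nonneg (rpow_nonneg hm.le _) habs2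
      calc |u ^ p - v ^ p - p * v ^ (p-1) * h|
          ≤ p * ((1 - p) * (v / 4) ^ (p-2) * |h|) * |h| := hRabs
        _ = p * (1 - p) * ((v / 4) ^ (p-2) * (|h| * |h|)) := step
        _ ≤ (1/2) * ((16 * v ^ (p-2)) * (9 * (v * b ^ 2))) := by
            have hmm := mul_le_mul b2 b1 hq (by norm_num)
            linarith only [hmm]
        _ = 72 * (v ^ (p-2) * v * b ^ 2) := by ring
        _ = 72 * (v ^ (p-1) * b ^ 2) := by rw [e7]
    -- v^(p-1) * b^2 ≤ b^α
    have key2 : v ^ (p-1) * b ^ 2 ≤ b ^ α := by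
      have eb : b ^ 2 = b ^ α * b ^ (2 - α) := by
        rw [← Real.rpow_add hb0, ← rpow_two_eq]; congr 1; ring
      have hba' : b ^ (2-α) ≤ a ^ (2-α) := rpow_le_rpow hb0.le hba (by linarith)
      have ea : v ^ (p-1) = (a ^ (2-α))⁻¹ := by
        rw [ida2, show α - 2 = -(2-α) by ring, Real.rpow_neg ha.le]
      have hapos : (0:ℝ) < a ^ (2-α) := rpow_pos_of_pos ha _
      rw [eb, ea]
      have hle1 : (a ^ (2-α))⁻¹ * b ^ (2-α) ≤ 1 := by
        rw [← div_eq_inv_mul]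
        exact div_le_one_of_le₀ hba' hapos.le
      have hbα' : (0:ℝ) ≤ b ^ α := rpow_nonneg hb0.le _
      calc (a ^ (2-α))⁻¹ * (b ^ α * b ^ (2-α))
          = ((a ^ (2-α))⁻¹ * b ^ (2-α)) * b ^ α := by ring
        _ ≤ 1 * b ^ α := mul_le_mul_of_nonneg_right hle1 hbα'
        _ = b ^ α := one_mul _
    -- assemble
    have iden : c ^ α - a ^ α - α * a ^ (α-2) * s
        = (u ^ p - v ^ p - p * v ^ (p-1) * h) + p * v ^ (p-1) * b ^ 2 := by
      rw [← idc, ← ida, ← ida2, hh_def, hp]; ring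
    have hterm : p * v ^ (p-1) * b ^ 2 ≤ v ^ (p-1) * b ^ 2 := by
      have hXpos : (0:ℝ) ≤ v ^ (p-1) * b ^ 2 :=
        mul_nonneg hv1pos.le (sq_nonneg b)
      calc p * v ^ (p-1) * b ^ 2 = p * (v ^ (p-1) * b ^ 2) := by ring
        _ ≤ 1 * (v ^ (p-1) * b ^ 2) :=
            mul_le_mul_of_nonneg_right (by linarith only [hp1]) hXpos
        _ = v ^ (p-1) * b ^ 2 := one_mul _
    have htermpos : (0:ℝ) ≤ p * v ^ (p-1) * b ^ 2 :=
      mul_nonneg (mul_nonneg hp0.le hv1pos.le) (sq_nonneg b)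
    rw [iden]
    calc |(u ^ p - v ^ p - p * v ^ (p-1) * h) + p * v ^ (p-1) * b ^ 2|
        ≤ |u ^ p - v ^ p - p * v ^ (p-1) * h| + |p * v ^ (p-1) * b ^ 2| := abs_add_le _ _
      _ ≤ 72 * (v ^ (p-1) * b ^ 2) + v ^ (p-1) * b ^ 2 := by
          rw [abs_of_nonneg htermpos]
          linarith only [hRfinal, hterm]
      _ = 73 * (v ^ (p-1) * b ^ 2) := by ring
      _ ≤ 73 * b ^ α := by linarith only [key2]
      _ ≤ 100 * b ^ α := by linarith only [hbα]

/-- Second-order Taylor remainder bound for `ξ ↦ ‖ξ‖^α`, `1 < α < 2`. -/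
theorem stmt_3 (α : ℝ) (hα₁ : 1 < α) (hα₂ : α < 2) (d : ℕ) (hd : 1 ≤ d) :
    ∃ C : ℝ, 0 < C ∧
      ∀ ξ η : EuclideanSpace ℝ (Fin d), ξ ≠ 0 →
        |‖ξ + η‖ ^ α - ‖ξ‖ ^ α - α * ‖ξ‖ ^ (α - 2) * ⟪ξ, η⟫| ≤ C * ‖η‖ ^ α := by
  refine ⟨100, by norm_num, fun ξ η hξ => ?_⟩
  have ha : 0 < ‖ξ‖ := norm_pos_iff.mpr hξ
  have hsq : ‖ξ + η‖ ^ 2 = ‖ξ‖ ^ 2 + 2 * ⟪ξ, η⟫ + ‖η‖ ^ 2 := norm_add_sq_real ξ η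
  have hs : |⟪ξ, η⟫| ≤ ‖ξ‖ * ‖η‖ := abs_real_inner_le_norm ξ η
  exact scalar_key hα₁ hα₂ ha (norm_nonneg η) (norm_nonneg _) hs hsq
end

section
/- Let d ≥ 1 and let m : ℝ^d × ℝ^d → ℂ be integrable. Suppose the function K(x,y) := ∫_{ℝ^d×ℝ^d} m(η,σ) e^{i⟨x,η⟩} e^{i⟨y,σ⟩} dη dσ satisfies ∫_{ℝ^d×ℝ^d} |K(x,y)| dx dy ≤ A. Then there is a constant C depending only on d such that for all exponents p, q, r ∈ [1,∞] with 1/p + 1/q + 1/r = 1 and all Schwartz functions f, g, h : ℝ^d → ℂ, | ∫_{ℝ^d×ℝ^d} m(η,σ) · 𝓕f(η) · 𝓕g(σ) · 𝓕h(η+σ) dη dσ | ≤ C · A · ‖f‖_{L^p} ‖g‖_{L^q} ‖h‖_{L^r}. -/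
open MeasureTheory
open scoped RealInnerProductSpace ENNReal SchwartzMap

/-- Fourier transform with the convention `𝓕f(ξ) = ∫ f(x) e^{-i⟨x,ξ⟩} dx`. -/
noncomputable def FT {d : ℕ} (f : EuclideanSpace ℝ (Fin d) → ℂ)
    (ξ : EuclideanSpace ℝ (Fin d)) : ℂ :=
  ∫ x, Complex.exp (-(Complex.I * ((⟪x, ξ⟫ : ℝ) : ℂ))) * f x

namespace Stmt7Aux

variable {d : ℕ}
local notation "E" => EuclideanSpace ℝ (Fin d)

instance : OpensMeasurableSpace ((E × E) × (E × E)) := Prod.opensMeasurableSpace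

lemma nnnorm_expI (x : ℝ) : ‖Complex.exp (Complex.I * (x : ℂ))‖₊ = 1 := by
  have : ‖Complex.exp (Complex.I * (x : ℂ))‖ = 1 := by
    rw [Complex.norm_exp]
    simp [Complex.mul_re]
  exact NNReal.coe_injective (by simpa using this)

lemma holder3 {p q r : ℝ≥0∞} (hpqr : 1 / p + 1 / q + 1 / r = 1)
    (a b c : E → ℂ) (ha : AEStronglyMeasurable a volume)
    (hb : AEStronglyMeasurable b volume) (hc : AEStronglyMeasurable c volume) :
    (‖∫ z, a z * b z * c z‖₊ : ℝ≥0∞) ≤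
      eLpNorm a p volume * eLpNorm b q volume * eLpNorm c r volume := by
  set s : ℝ≥0∞ := (1 / q + 1 / r)⁻¹ with hs
  have hsinv : 1 / s = 1 / q + 1 / r := by
    rw [hs, one_div, inv_inv]
  have h1 : (1 : ℝ≥0∞) / 1 = 1 / p + 1 / s := by
    rw [hsinv, one_div_one, ← add_assoc]; exact hpqr.symm
  have hbc : AEStronglyMeasurable (fun z => b z * c z) volume := hb.mul hc
  have key2 : eLpNorm (fun z => b z * c z) s volume ≤
      eLpNorm b q volume * eLpNorm c r volume := by
    have := (haveI : ENNReal.HolderTriple q r s := ⟨by simpa [one_div] using hsinv.symm⟩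
      eLpNorm_smul_le_mul_eLpNorm (p := q) (q := r) (r := s) (μ := volume) (f := c) (φ := b) hc hb)
    exact this
  have key1 : eLpNorm (fun z => a z * (b z * c z)) 1 volume ≤
      eLpNorm a p volume * eLpNorm (fun z => b z * c z) s volume := by
    have := (haveI : ENNReal.HolderTriple p s 1 := ⟨by simpa [one_div] using h1.symm⟩
      eLpNorm_smul_le_mul_eLpNorm (p := p) (q := s) (r := 1) (μ := volume)
      (f := fun z => b z * c z) (φ := a) hbc ha)
    exact this
  calc (‖∫ z, a z * b z * c z‖₊ : ℝ≥0∞)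
      ≤ ∫⁻ z, ‖a z * b z * c z‖₊ := enorm_integral_le_lintegral_enorm _
    _ = eLpNorm (fun z => a z * (b z * c z)) 1 volume := by
        rw [eLpNorm_one_eq_lintegral_enorm]; simp_rw [mul_assoc]; rfl
    _ ≤ eLpNorm a p volume * eLpNorm (fun z => b z * c z) s volume := key1
    _ ≤ eLpNorm a p volume * (eLpNorm b q volume * eLpNorm c r volume) := by gcongr
    _ = _ := (mul_assoc _ _ _).symm

lemma trans_lint (f : 𝓢(E, ℂ)) (c : E) :
    ∫⁻ t, (‖f (-t - c)‖₊ : ℝ≥0∞) = ∫⁻ t, ‖f t‖₊ := by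
  have h : ∀ t : E, -t - c = -c - t := fun t => by abel
  simp_rw [h]
  exact (Measure.measurePreserving_sub_left volume (-c)).lintegral_comp
    (f.continuous.measurable.enorm)

lemma prodFin (f g h : 𝓢(E, ℂ)) :
    ∫⁻ x : (E × E) × E, (‖f (-x.1.1 - x.2) * g (-x.1.2 - x.2) * h x.2‖₊ : ℝ≥0∞)
      = (∫⁻ t, ‖f t‖₊) * (∫⁻ t, ‖g t‖₊) * (∫⁻ t, ‖h t‖₊) := by
  have cont : Continuous (fun x : (E × E) × E =>
      f (-x.1.1 - x.2) * g (-x.1.2 - x.2) * h x.2) := by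
    apply Continuous.mul
    apply Continuous.mul
    · exact f.continuous.comp ((continuous_fst.fst).neg.sub continuous_snd)
    · exact g.continuous.comp ((continuous_fst.snd).neg.sub continuous_snd)
    · exact h.continuous.comp continuous_snd
  rw [Measure.volume_eq_prod, lintegral_prod_symm (fun x : (E × E) × E =>
    (‖f (-x.1.1 - x.2) * g (-x.1.2 - x.2) * h x.2‖₊ : ℝ≥0∞)) cont.measurable.enorm.aemeasurable]
  have inner : ∀ z : E, ∫⁻ u : E × E, (‖f (-u.1 - z) * g (-u.2 - z) * h z‖₊ : ℝ≥0∞)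
      = (∫⁻ t, ‖f t‖₊) * (∫⁻ t, ‖g t‖₊) * ‖h z‖₊ := by
    intro z
    have hpt : ∀ u : E × E, (‖f (-u.1 - z) * g (-u.2 - z) * h z‖₊ : ℝ≥0∞)
        = ((‖f (-u.1 - z)‖₊ : ℝ≥0∞) * ‖g (-u.2 - z)‖₊) * ‖h z‖₊ := by
      intro u; simp [nnnorm_mul]
    simp_rw [hpt]
    rw [lintegral_mul_const'' _ ?_]
    · congr 1
      rw [Measure.volume_eq_prod, ← trans_lint f z, ← trans_lint g z]
      exact lintegral_prod_mul
        (f.continuous.comp (continuous_id.neg.sub continuous_const)).measurable.enorm.aemeasurable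
        (g.continuous.comp (continuous_id.neg.sub continuous_const)).measurable.enorm.aemeasurable
    · exact (((f.continuous.comp (continuous_id.neg.sub continuous_const)).measurable.enorm.comp
        measurable_fst).mul
        ((g.continuous.comp (continuous_id.neg.sub continuous_const)).measurable.enorm.comp
        measurable_snd)).aemeasurable
  simp_rw [inner]
  rw [lintegral_const_mul'' _ (f := fun z => (‖h z‖₊ : ℝ≥0∞)) h.continuous.measurable.enorm.aemeasurable]

lemma FT_translate (f : 𝓢(E, ℂ)) (w1 z : E) :
    ∫ t, Complex.exp (Complex.I * ((⟪t, w1⟫ : ℝ) : ℂ)) * f (-t - z)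
      = Complex.exp (Complex.I * ((⟪-z, w1⟫ : ℝ) : ℂ)) * FT (fun y => f y) w1 := by
  have h1 : ∀ s : E, Complex.exp (Complex.I * ((⟪-z - s, w1⟫ : ℝ) : ℂ)) * f (-(-z - s) - z)
      = Complex.exp (Complex.I * ((⟪-z, w1⟫ : ℝ) : ℂ)) *
          (Complex.exp (-(Complex.I * ((⟪s, w1⟫ : ℝ) : ℂ))) * f s) := by
    intro s
    have h2 : (-(-z - s) - z) = s := by abel
    rw [h2, ← mul_assoc, ← Complex.exp_add]
    congr 2
    have h3 : ⟪-z - s, w1⟫ = ⟪-z, w1⟫ - ⟪s, w1⟫ := by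
      rw [sub_eq_add_neg, inner_add_left, inner_neg_left, inner_neg_left]; ring
    rw [h3]; push_cast; ring
  calc ∫ t, Complex.exp (Complex.I * ((⟪t, w1⟫ : ℝ) : ℂ)) * f (-t - z)
      = ∫ s, Complex.exp (Complex.I * ((⟪-z - s, w1⟫ : ℝ) : ℂ)) * f (-(-z - s) - z) :=
        (integral_sub_left_eq_self
          (fun t => Complex.exp (Complex.I * ((⟪t, w1⟫ : ℝ) : ℂ)) * f (-t - z)) volume (-z)).symm
    _ = ∫ s, Complex.exp (Complex.I * ((⟪-z, w1⟫ : ℝ) : ℂ)) *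
          (Complex.exp (-(Complex.I * ((⟪s, w1⟫ : ℝ) : ℂ))) * f s) := by simp_rw [h1]
    _ = _ := by rw [integral_const_mul]; rfl

lemma stepA (f g h : 𝓢(E, ℂ)) (w : E × E) :
    (∫ u : E × E, Complex.exp (Complex.I * ((⟪u.1, w.1⟫ : ℝ) : ℂ)) *
        Complex.exp (Complex.I * ((⟪u.2, w.2⟫ : ℝ) : ℂ)) *
        ∫ z, f (-u.1 - z) * g (-u.2 - z) * h z)
      = FT (fun y => f y) w.1 * FT (fun y => g y) w.2 * FT (fun y => h y) (w.1 + w.2) := by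
  have hmove : ∀ u : E × E,
      Complex.exp (Complex.I * ((⟪u.1, w.1⟫ : ℝ) : ℂ)) *
        Complex.exp (Complex.I * ((⟪u.2, w.2⟫ : ℝ) : ℂ)) *
        (∫ z, f (-u.1 - z) * g (-u.2 - z) * h z)
      = ∫ z, Complex.exp (Complex.I * ((⟪u.1, w.1⟫ : ℝ) : ℂ)) *
          Complex.exp (Complex.I * ((⟪u.2, w.2⟫ : ℝ) : ℂ)) *
          (f (-u.1 - z) * g (-u.2 - z) * h z) :=
    fun u => (integral_const_mul _ _).symm
  simp_rw [hmove]
  -- integrability for Fubini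
  have hInt : Integrable (Function.uncurry fun (u : E × E) (z : E) =>
      Complex.exp (Complex.I * ((⟪u.1, w.1⟫ : ℝ) : ℂ)) *
        Complex.exp (Complex.I * ((⟪u.2, w.2⟫ : ℝ) : ℂ)) *
        (f (-u.1 - z) * g (-u.2 - z) * h z))
      ((volume : Measure (E × E)).prod (volume : Measure E)) := by
    have contP : Continuous (fun x : (E × E) × E =>
        f (-x.1.1 - x.2) * g (-x.1.2 - x.2) * h x.2) := by
      apply Continuous.mul
      apply Continuous.mul
      · exact f.continuous.comp ((continuous_fst.fst).neg.sub continuous_snd)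
      · exact g.continuous.comp ((continuous_fst.snd).neg.sub continuous_snd)
      · exact h.continuous.comp continuous_snd
    have contE : Continuous (fun x : (E × E) × E =>
        Complex.exp (Complex.I * ((⟪x.1.1, w.1⟫ : ℝ) : ℂ)) *
          Complex.exp (Complex.I * ((⟪x.1.2, w.2⟫ : ℝ) : ℂ))) := by
      apply Continuous.mul
      · exact Complex.continuous_exp.comp (continuous_const.mul
          (Complex.continuous_ofReal.comp ((continuous_fst.fst).inner continuous_const)))
      · exact Complex.continuous_exp.comp (continuous_const.mul
          (Complex.continuous_ofReal.comp ((continuous_fst.snd).inner continuous_const)))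
    constructor
    · exact (contE.mul contP).aestronglyMeasurable
    · unfold HasFiniteIntegral
      have hpt : ∀ x : (E × E) × E,
          (‖Complex.exp (Complex.I * ((⟪x.1.1, w.1⟫ : ℝ) : ℂ)) *
            Complex.exp (Complex.I * ((⟪x.1.2, w.2⟫ : ℝ) : ℂ)) *
            (f (-x.1.1 - x.2) * g (-x.1.2 - x.2) * h x.2)‖₊ : ℝ≥0∞)
          = (‖f (-x.1.1 - x.2) * g (-x.1.2 - x.2) * h x.2‖₊ : ℝ≥0∞) := by
        intro x
        simp only [nnnorm_mul, ENNReal.coe_mul, nnnorm_expI, ENNReal.coe_one, one_mul]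
      calc ∫⁻ x, _ ∂(volume : Measure (E × E)).prod volume
          = ∫⁻ x : (E × E) × E, (‖f (-x.1.1 - x.2) * g (-x.1.2 - x.2) * h x.2‖₊ : ℝ≥0∞)
              ∂(volume : Measure (E × E)).prod volume := lintegral_congr hpt
        _ = (∫⁻ t, ‖f t‖₊) * (∫⁻ t, ‖g t‖₊) * (∫⁻ t, ‖h t‖₊) := by
              rw [← Measure.volume_eq_prod]; exact prodFin f g h
        _ < ⊤ := by
              exact ENNReal.mul_lt_top (ENNReal.mul_lt_top f.integrable.2 g.integrable.2)
                h.integrable.2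
  rw [integral_integral_swap hInt]
  have inner : ∀ z : E, (∫ u : E × E,
      Complex.exp (Complex.I * ((⟪u.1, w.1⟫ : ℝ) : ℂ)) *
        Complex.exp (Complex.I * ((⟪u.2, w.2⟫ : ℝ) : ℂ)) *
        (f (-u.1 - z) * g (-u.2 - z) * h z))
      = (Complex.exp (Complex.I * ((⟪-z, w.1⟫ : ℝ) : ℂ)) * FT (fun y => f y) w.1) *
        (Complex.exp (Complex.I * ((⟪-z, w.2⟫ : ℝ) : ℂ)) * FT (fun y => g y) w.2) * h z := by
    intro z
    have hre : ∀ u : E × E,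
        Complex.exp (Complex.I * ((⟪u.1, w.1⟫ : ℝ) : ℂ)) *
          Complex.exp (Complex.I * ((⟪u.2, w.2⟫ : ℝ) : ℂ)) *
          (f (-u.1 - z) * g (-u.2 - z) * h z)
        = ((Complex.exp (Complex.I * ((⟪u.1, w.1⟫ : ℝ) : ℂ)) * f (-u.1 - z)) *
            (Complex.exp (Complex.I * ((⟪u.2, w.2⟫ : ℝ) : ℂ)) * g (-u.2 - z))) * h z :=
      fun u => by ring
    simp_rw [hre]
    rw [integral_mul_const, Measure.volume_eq_prod]
    congr 1
    rw [← FT_translate f w.1 z, ← FT_translate g w.2 z]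
    exact integral_prod_mul
      (fun t : E => Complex.exp (Complex.I * ((⟪t, w.1⟫ : ℝ) : ℂ)) * f (-t - z))
      (fun t : E => Complex.exp (Complex.I * ((⟪t, w.2⟫ : ℝ) : ℂ)) * g (-t - z))
  simp_rw [inner]
  have hre2 : ∀ z : E,
      (Complex.exp (Complex.I * ((⟪-z, w.1⟫ : ℝ) : ℂ)) * FT (fun y => f y) w.1) *
        (Complex.exp (Complex.I * ((⟪-z, w.2⟫ : ℝ) : ℂ)) * FT (fun y => g y) w.2) * h z
      = (FT (fun y => f y) w.1 * FT (fun y => g y) w.2) *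
          (Complex.exp (-(Complex.I * ((⟪z, w.1 + w.2⟫ : ℝ) : ℂ))) * h z) := by
    intro z
    have hexp : Complex.exp (Complex.I * ((⟪-z, w.1⟫ : ℝ) : ℂ)) *
        Complex.exp (Complex.I * ((⟪-z, w.2⟫ : ℝ) : ℂ))
        = Complex.exp (-(Complex.I * ((⟪z, w.1 + w.2⟫ : ℝ) : ℂ))) := by
      rw [← Complex.exp_add]
      congr 1
      rw [inner_add_right, inner_neg_left, inner_neg_left]
      push_cast; ring
    rw [← hexp]; ring
  simp_rw [hre2]
  rw [integral_const_mul]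
  rfl

lemma contP (f g h : 𝓢(E, ℂ)) : Continuous (fun x : (E × E) × E =>
    f (-x.1.1 - x.2) * g (-x.1.2 - x.2) * h x.2) := by
  apply Continuous.mul
  apply Continuous.mul
  · exact f.continuous.comp ((continuous_fst.fst).neg.sub continuous_snd)
  · exact g.continuous.comp ((continuous_fst.snd).neg.sub continuous_snd)
  · exact h.continuous.comp continuous_snd

lemma hJmeas (f g h : 𝓢(E, ℂ)) : AEStronglyMeasurable
    (fun u : E × E => ∫ z, f (-u.1 - z) * g (-u.2 - z) * h z) volume :=
  ((contP f g h).aestronglyMeasurable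
    (μ := (volume : Measure (E × E)).prod (volume : Measure E))).integral_prod_right'

lemma hJfin (f g h : 𝓢(E, ℂ)) :
    ∫⁻ u : E × E, (‖∫ z, f (-u.1 - z) * g (-u.2 - z) * h z‖₊ : ℝ≥0∞)
      ≤ (∫⁻ t, ‖f t‖₊) * (∫⁻ t, ‖g t‖₊) * (∫⁻ t, ‖h t‖₊) := by
  calc ∫⁻ u : E × E, (‖∫ z, f (-u.1 - z) * g (-u.2 - z) * h z‖₊ : ℝ≥0∞)
      ≤ ∫⁻ u : E × E, ∫⁻ z, (‖f (-u.1 - z) * g (-u.2 - z) * h z‖₊ : ℝ≥0∞) :=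
        lintegral_mono fun u => enorm_integral_le_lintegral_enorm _
    _ = ∫⁻ x : (E × E) × E, (‖f (-x.1.1 - x.2) * g (-x.1.2 - x.2) * h x.2‖₊ : ℝ≥0∞) := by
        rw [Measure.volume_eq_prod]
        exact (lintegral_prod _ (contP f g h).measurable.enorm.aemeasurable).symm
    _ = _ := prodFin f g h

lemma key (m : E × E → ℂ) (hm : Integrable m volume) (f g h : 𝓢(E, ℂ)) :
    (∫ w : E × E, m w * FT (fun y => f y) w.1 * FT (fun y => g y) w.2 *
        FT (fun y => h y) (w.1 + w.2))
      = ∫ u : E × E,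
          (∫ w : E × E, m w * Complex.exp (Complex.I * ((⟪u.1, w.1⟫ : ℝ) : ℂ)) *
            Complex.exp (Complex.I * ((⟪u.2, w.2⟫ : ℝ) : ℂ))) *
          ∫ z, f (-u.1 - z) * g (-u.2 - z) * h z := by
  have h1 : ∀ w : E × E, m w * FT (fun y => f y) w.1 * FT (fun y => g y) w.2 *
      FT (fun y => h y) (w.1 + w.2)
      = ∫ u : E × E, m w * (Complex.exp (Complex.I * ((⟪u.1, w.1⟫ : ℝ) : ℂ)) *
          Complex.exp (Complex.I * ((⟪u.2, w.2⟫ : ℝ) : ℂ)) *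
          ∫ z, f (-u.1 - z) * g (-u.2 - z) * h z) := by
    intro w
    rw [show m w * FT (fun y => f y) w.1 * FT (fun y => g y) w.2 *
        FT (fun y => h y) (w.1 + w.2)
      = m w * (FT (fun y => f y) w.1 * FT (fun y => g y) w.2 *
        FT (fun y => h y) (w.1 + w.2)) from by ring]
    rw [← stepA f g h w]
    exact (integral_const_mul _ _).symm
  have hInt2 : Integrable (Function.uncurry fun (w u : E × E) =>
      m w * (Complex.exp (Complex.I * ((⟪u.1, w.1⟫ : ℝ) : ℂ)) *
        Complex.exp (Complex.I * ((⟪u.2, w.2⟫ : ℝ) : ℂ)) *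
        ∫ z, f (-u.1 - z) * g (-u.2 - z) * h z))
      ((volume : Measure (E × E)).prod (volume : Measure (E × E))) := by
    have contE : Continuous (fun x : (E × E) × (E × E) =>
        Complex.exp (Complex.I * ((⟪x.2.1, x.1.1⟫ : ℝ) : ℂ)) *
          Complex.exp (Complex.I * ((⟪x.2.2, x.1.2⟫ : ℝ) : ℂ))) := by
      apply Continuous.mul
      · exact Complex.continuous_exp.comp (continuous_const.mul
          (Complex.continuous_ofReal.comp ((continuous_snd.fst).inner continuous_fst.fst)))
      · exact Complex.continuous_exp.comp (continuous_const.mul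
          (Complex.continuous_ofReal.comp ((continuous_snd.snd).inner continuous_fst.snd)))
    constructor
    · exact hm.1.comp_fst.mul (contE.aestronglyMeasurable.mul (hJmeas f g h).comp_snd)
    · unfold HasFiniteIntegral
      have hpt : ∀ x : (E × E) × (E × E),
          (‖m x.1 * (Complex.exp (Complex.I * ((⟪x.2.1, x.1.1⟫ : ℝ) : ℂ)) *
            Complex.exp (Complex.I * ((⟪x.2.2, x.1.2⟫ : ℝ) : ℂ)) *
            ∫ z, f (-x.2.1 - z) * g (-x.2.2 - z) * h z)‖₊ : ℝ≥0∞)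
          = (‖m x.1‖₊ : ℝ≥0∞) * ‖∫ z, f (-x.2.1 - z) * g (-x.2.2 - z) * h z‖₊ := by
        intro x
        simp only [nnnorm_mul, ENNReal.coe_mul, nnnorm_expI, ENNReal.coe_one, one_mul]
      calc ∫⁻ x, _ ∂(volume : Measure (E × E)).prod (volume : Measure (E × E))
          = ∫⁻ x : (E × E) × (E × E), (‖m x.1‖₊ : ℝ≥0∞) *
              ‖∫ z, f (-x.2.1 - z) * g (-x.2.2 - z) * h z‖₊
              ∂(volume : Measure (E × E)).prod (volume : Measure (E × E)) :=
            lintegral_congr hpt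
        _ = (∫⁻ w : E × E, (‖m w‖₊ : ℝ≥0∞)) *
              ∫⁻ u : E × E, (‖∫ z, f (-u.1 - z) * g (-u.2 - z) * h z‖₊ : ℝ≥0∞) :=
            lintegral_prod_mul hm.1.aemeasurable.enorm (hJmeas f g h).aemeasurable.enorm
        _ < ⊤ := ENNReal.mul_lt_top hm.2 ((hJfin f g h).trans_lt
            (ENNReal.mul_lt_top (ENNReal.mul_lt_top f.integrable.2 g.integrable.2)
              h.integrable.2))
  have h3 : ∀ u : E × E, (∫ w : E × E, m w *
      (Complex.exp (Complex.I * ((⟪u.1, w.1⟫ : ℝ) : ℂ)) *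
        Complex.exp (Complex.I * ((⟪u.2, w.2⟫ : ℝ) : ℂ)) *
        ∫ z, f (-u.1 - z) * g (-u.2 - z) * h z))
      = (∫ w : E × E, m w * Complex.exp (Complex.I * ((⟪u.1, w.1⟫ : ℝ) : ℂ)) *
          Complex.exp (Complex.I * ((⟪u.2, w.2⟫ : ℝ) : ℂ))) *
        ∫ z, f (-u.1 - z) * g (-u.2 - z) * h z := by
    intro u
    rw [show (fun w : E × E => m w *
        (Complex.exp (Complex.I * ((⟪u.1, w.1⟫ : ℝ) : ℂ)) *
          Complex.exp (Complex.I * ((⟪u.2, w.2⟫ : ℝ) : ℂ)) *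
          ∫ z, f (-u.1 - z) * g (-u.2 - z) * h z))
      = fun w : E × E => (m w * Complex.exp (Complex.I * ((⟪u.1, w.1⟫ : ℝ) : ℂ)) *
          Complex.exp (Complex.I * ((⟪u.2, w.2⟫ : ℝ) : ℂ))) *
          ∫ z, f (-u.1 - z) * g (-u.2 - z) * h z from funext fun w => by ring]
    exact integral_mul_const _ _
  calc (∫ w : E × E, m w * FT (fun y => f y) w.1 * FT (fun y => g y) w.2 *
        FT (fun y => h y) (w.1 + w.2))
      = ∫ w : E × E, ∫ u : E × E, m w *
          (Complex.exp (Complex.I * ((⟪u.1, w.1⟫ : ℝ) : ℂ)) *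
            Complex.exp (Complex.I * ((⟪u.2, w.2⟫ : ℝ) : ℂ)) *
            ∫ z, f (-u.1 - z) * g (-u.2 - z) * h z) :=
        integral_congr_ae (Filter.Eventually.of_forall h1)
    _ = ∫ u : E × E, ∫ w : E × E, m w *
          (Complex.exp (Complex.I * ((⟪u.1, w.1⟫ : ℝ) : ℂ)) *
            Complex.exp (Complex.I * ((⟪u.2, w.2⟫ : ℝ) : ℂ)) *
            ∫ z, f (-u.1 - z) * g (-u.2 - z) * h z) :=
        integral_integral_swap hInt2
    _ = _ := integral_congr_ae (Filter.Eventually.of_forall h3)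

end Stmt7Aux
section Final

open Stmt7Aux

/-- Lemma 7.1 (first part): trilinear multiplier estimate.  If the inverse Fourier
transform `K` of the multiplier `m` has `L¹` norm at most `A`, then the trilinear
form associated to `m` satisfies a Hölder-type bound. -/
theorem stmt_7 (d : ℕ) (hd : 1 ≤ d) :
    ∃ C : ℝ, 0 < C ∧
      ∀ (m : EuclideanSpace ℝ (Fin d) × EuclideanSpace ℝ (Fin d) → ℂ) (A : ℝ),
        Integrable m volume →
        (∫⁻ z : EuclideanSpace ℝ (Fin d) × EuclideanSpace ℝ (Fin d),
            (‖∫ w : EuclideanSpace ℝ (Fin d) × EuclideanSpace ℝ (Fin d),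
                m w * Complex.exp (Complex.I * ((⟪z.1, w.1⟫ : ℝ) : ℂ)) *
                  Complex.exp (Complex.I * ((⟪z.2, w.2⟫ : ℝ) : ℂ))‖₊ : ℝ≥0∞)) ≤
          ENNReal.ofReal A →
        ∀ p q r : ℝ≥0∞, 1 ≤ p → 1 ≤ q → 1 ≤ r → 1 / p + 1 / q + 1 / r = 1 →
        ∀ f g h : SchwartzMap (EuclideanSpace ℝ (Fin d)) ℂ,
          ENNReal.ofReal
              (‖(∫ w : EuclideanSpace ℝ (Fin d) × EuclideanSpace ℝ (Fin d),
                  m w * FT (fun y => f y) w.1 * FT (fun y => g y) w.2 *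
                    FT (fun y => h y) (w.1 + w.2))‖) ≤
            ENNReal.ofReal (C * A) * eLpNorm (fun y => f y) p volume *
              eLpNorm (fun y => g y) q volume * eLpNorm (fun y => h y) r volume := by
  set E := EuclideanSpace ℝ (Fin d)
  refine ⟨1, one_pos, ?_⟩
  intro m A hm hK p q r hp hq hr hpqr f g h
  rw [one_mul]
  set Np := eLpNorm (fun y => f y) p volume with hNp
  set Nq := eLpNorm (fun y => g y) q volume with hNq
  set Nr := eLpNorm (fun y => h y) r volume with hNr
  -- Hölder bound on the inner convolution-type integral
  have claimC : ∀ u : E × E,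
      (‖∫ z, f (-u.1 - z) * g (-u.2 - z) * h z‖₊ : ℝ≥0∞) ≤ Np * Nq * Nr := by
    intro u
    have e1 : eLpNorm (fun z : E => f (-u.1 - z)) p volume = Np :=
      eLpNorm_comp_measurePreserving f.continuous.aestronglyMeasurable
        (MeasureTheory.Measure.measurePreserving_sub_left volume (-u.1))
    have e2 : eLpNorm (fun z : E => g (-u.2 - z)) q volume = Nq :=
      eLpNorm_comp_measurePreserving g.continuous.aestronglyMeasurable
        (MeasureTheory.Measure.measurePreserving_sub_left volume (-u.2))
    have := holder3 hpqr (fun z : E => f (-u.1 - z)) (fun z : E => g (-u.2 - z))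
      (fun z : E => h z)
      (f.continuous.comp (continuous_const.sub continuous_id)).aestronglyMeasurable
      (g.continuous.comp (continuous_const.sub continuous_id)).aestronglyMeasurable
      h.continuous.aestronglyMeasurable
    rwa [e1, e2] at this
  -- measurability of the kernel K
  have hKmeas : AEStronglyMeasurable
      (fun u : E × E => ∫ w : E × E,
        m w * Complex.exp (Complex.I * ((⟪u.1, w.1⟫ : ℝ) : ℂ)) *
          Complex.exp (Complex.I * ((⟪u.2, w.2⟫ : ℝ) : ℂ))) volume := by
    have : AEStronglyMeasurable (fun x : (E × E) × (E × E) =>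
        m x.2 * Complex.exp (Complex.I * ((⟪x.1.1, x.2.1⟫ : ℝ) : ℂ)) *
          Complex.exp (Complex.I * ((⟪x.1.2, x.2.2⟫ : ℝ) : ℂ)))
        ((volume : Measure (E × E)).prod (volume : Measure (E × E))) := by
      refine (hm.1.comp_snd.mul ?_).mul ?_
      · exact (Complex.continuous_exp.comp (continuous_const.mul
          (Complex.continuous_ofReal.comp
            ((continuous_fst.fst).inner continuous_snd.fst)))).aestronglyMeasurable
      · exact (Complex.continuous_exp.comp (continuous_const.mul
          (Complex.continuous_ofReal.comp
            ((continuous_fst.snd).inner continuous_snd.snd)))).aestronglyMeasurable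
    exact this.integral_prod_right'
  rw [ofReal_norm, key m hm f g h]
  calc (‖∫ u : E × E,
        (∫ w : E × E, m w * Complex.exp (Complex.I * ((⟪u.1, w.1⟫ : ℝ) : ℂ)) *
          Complex.exp (Complex.I * ((⟪u.2, w.2⟫ : ℝ) : ℂ))) *
        ∫ z, f (-u.1 - z) * g (-u.2 - z) * h z‖₊ : ℝ≥0∞)
      ≤ ∫⁻ u : E × E, (‖(∫ w : E × E, m w * Complex.exp (Complex.I * ((⟪u.1, w.1⟫ : ℝ) : ℂ)) *
          Complex.exp (Complex.I * ((⟪u.2, w.2⟫ : ℝ) : ℂ))) *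
          ∫ z, f (-u.1 - z) * g (-u.2 - z) * h z‖₊ : ℝ≥0∞) :=
        enorm_integral_le_lintegral_enorm _
    _ = ∫⁻ u : E × E, (‖∫ w : E × E, m w * Complex.exp (Complex.I * ((⟪u.1, w.1⟫ : ℝ) : ℂ)) *
          Complex.exp (Complex.I * ((⟪u.2, w.2⟫ : ℝ) : ℂ))‖₊ : ℝ≥0∞) *
          ‖∫ z, f (-u.1 - z) * g (-u.2 - z) * h z‖₊ :=
        lintegral_congr fun u => by rw [nnnorm_mul, ENNReal.coe_mul]
    _ ≤ ∫⁻ u : E × E, (‖∫ w : E × E, m w * Complex.exp (Complex.I * ((⟪u.1, w.1⟫ : ℝ) : ℂ)) *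
          Complex.exp (Complex.I * ((⟪u.2, w.2⟫ : ℝ) : ℂ))‖₊ : ℝ≥0∞) * (Np * Nq * Nr) :=
        lintegral_mono fun u => mul_le_mul_right (claimC u) _
    _ = (∫⁻ u : E × E, (‖∫ w : E × E, m w *
          Complex.exp (Complex.I * ((⟪u.1, w.1⟫ : ℝ) : ℂ)) *
          Complex.exp (Complex.I * ((⟪u.2, w.2⟫ : ℝ) : ℂ))‖₊ : ℝ≥0∞)) * (Np * Nq * Nr) :=
        lintegral_mul_const'' _ hKmeas.aemeasurable.enorm
    _ ≤ ENNReal.ofReal A * (Np * Nq * Nr) := mul_le_mul_left hK _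
    _ = ENNReal.ofReal A * Np * Nq * Nr := by ring

end Final
end

section
/- Let 1 < α < 2. There is a constant C depending only on α such that for every measurable g : ℝ³ → ℂ with g ∈ L²(ℝ³) and with x ↦ ‖x‖·g(x) in L²(ℝ³), one has ‖g‖_{L^{6/(7−2α)}(ℝ³)} ≤ C · ‖ ‖x‖·g ‖_{L²(ℝ³)}^{2−α} · ‖g‖_{L²(ℝ³)}^{α−1}. -/
open MeasureTheory Metric Set
open scoped ENNReal

local notation "E3" => EuclideanSpace ℝ (Fin 3)

lemma aux_meas {r : ℝ} : Measurable fun x : E3 => (‖x‖₊ : ℝ≥0∞) ^ (-r) :=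
  (ENNReal.continuous_rpow_const.measurable).comp measurable_nnnorm.coe_nnreal_ennreal

lemma aux_c1_lt_top {r : ℝ} (hr : (3:ℝ) < r) :
    (∫⁻ x : E3, ((ball (0:E3) 1)ᶜ).indicator (fun x => (‖x‖₊ : ℝ≥0∞) ^ (-r)) x ∂volume) < ∞ := by
  have hb : ∀ x : E3, ((ball (0:E3) 1)ᶜ).indicator (fun x => (‖x‖₊ : ℝ≥0∞) ^ (-r)) x
      ≤ ENNReal.ofReal (2 ^ r) * ENNReal.ofReal ((1 + ‖x‖) ^ (-r)) := by
    intro x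
    by_cases hx : x ∈ (ball (0:E3) 1)ᶜ
    · rw [Set.indicator_of_mem hx]
      have h1 : (1:ℝ) ≤ ‖x‖ := by simpa using hx
      have hx0 : (0:ℝ) < ‖x‖ := lt_of_lt_of_le one_pos h1
      have key : ‖x‖ ^ (-r) ≤ 2 ^ r * (1 + ‖x‖) ^ (-r) := by
        have h2 : (1 + ‖x‖) / 2 ≤ ‖x‖ := by linarith
        have h3 : (0:ℝ) < (1 + ‖x‖) / 2 := by linarith
        have := Real.rpow_le_rpow_of_nonpos h3 h2 (neg_nonpos.mpr (by linarith : (0:ℝ) ≤ r))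
        calc ‖x‖ ^ (-r) ≤ ((1 + ‖x‖) / 2) ^ (-r) := this
          _ = (1 + ‖x‖) ^ (-r) / 2 ^ (-r) := Real.div_rpow (by linarith) (by norm_num) (-r)
          _ = 2 ^ r * (1 + ‖x‖) ^ (-r) := by
              rw [Real.rpow_neg (by norm_num : (0:ℝ) ≤ 2), div_eq_mul_inv, inv_inv, mul_comm]
      calc (‖x‖₊ : ℝ≥0∞) ^ (-r) = ENNReal.ofReal (‖x‖ ^ (-r)) := by
            rw [← enorm_eq_nnnorm, ← ofReal_norm, ENNReal.ofReal_rpow_of_pos hx0]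
        _ ≤ ENNReal.ofReal (2 ^ r * (1 + ‖x‖) ^ (-r)) := ENNReal.ofReal_le_ofReal key
        _ = _ := ENNReal.ofReal_mul (by positivity)
    · rw [Set.indicator_of_notMem hx]; exact zero_le
  calc (∫⁻ x : E3, ((ball (0:E3) 1)ᶜ).indicator (fun x => (‖x‖₊ : ℝ≥0∞) ^ (-r)) x ∂volume)
      ≤ ∫⁻ x : E3, ENNReal.ofReal (2 ^ r) * ENNReal.ofReal ((1 + ‖x‖) ^ (-r)) ∂volume :=
        lintegral_mono hb
    _ = ENNReal.ofReal (2 ^ r) * ∫⁻ x : E3, ENNReal.ofReal ((1 + ‖x‖) ^ (-r)) ∂volume :=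
        lintegral_const_mul' _ _ ENNReal.ofReal_ne_top
    _ < ∞ := ENNReal.mul_lt_top ENNReal.ofReal_lt_top (by
        apply finite_integral_one_add_norm
        rw [finrank_euclideanSpace_fin]; exact_mod_cast hr)
lemma aux_scaling {r : ℝ} {R : ℝ} (hR : 0 < R) :
    (∫⁻ x : E3, ((ball (0:E3) R)ᶜ).indicator (fun x => (‖x‖₊ : ℝ≥0∞) ^ (-r)) x ∂volume)
      = ENNReal.ofReal R ^ (3 - r) *
        ∫⁻ x : E3, ((ball (0:E3) 1)ᶜ).indicator (fun x => (‖x‖₊ : ℝ≥0∞) ^ (-r)) x ∂volume := by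
  have hFmeas : Measurable (((ball (0:E3) R)ᶜ).indicator (fun x => (‖x‖₊ : ℝ≥0∞) ^ (-r))) :=
    aux_meas.indicator (measurableSet_ball.compl)
  have hmap : Measure.map (R • ·) (volume : Measure E3)
      = ENNReal.ofReal ((R ^ 3)⁻¹) • (volume : Measure E3) := by
    rw [Measure.map_addHaar_smul volume hR.ne', finrank_euclideanSpace_fin,
      abs_of_pos (by positivity)]
  have hlm : (∫⁻ x : E3, ((ball (0:E3) R)ᶜ).indicator (fun x => (‖x‖₊ : ℝ≥0∞) ^ (-r)) (R • x) ∂volume)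
      = ENNReal.ofReal ((R ^ 3)⁻¹) *
        ∫⁻ x : E3, ((ball (0:E3) R)ᶜ).indicator (fun x => (‖x‖₊ : ℝ≥0∞) ^ (-r)) x ∂volume := by
    rw [← lintegral_map hFmeas (measurable_const_smul R), hmap, lintegral_smul_measure, smul_eq_mul]
  have hpt : ∀ x : E3, ((ball (0:E3) R)ᶜ).indicator (fun x => (‖x‖₊ : ℝ≥0∞) ^ (-r)) (R • x)
      = ENNReal.ofReal R ^ (-r) *
        ((ball (0:E3) 1)ᶜ).indicator (fun x => (‖x‖₊ : ℝ≥0∞) ^ (-r)) x := by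
    intro x
    have hmem : (R • x ∈ (ball (0:E3) R)ᶜ) ↔ x ∈ (ball (0:E3) 1)ᶜ := by
      simp only [mem_compl_iff, mem_ball_zero_iff, norm_smul, Real.norm_eq_abs,
        abs_of_pos hR, not_lt]
      constructor
      · intro h; exact le_of_mul_le_mul_left (by linarith) hR
      · intro h; exact (le_mul_iff_one_le_right hR).2 h
    by_cases hx : x ∈ (ball (0:E3) 1)ᶜ
    · rw [Set.indicator_of_mem (hmem.2 hx), Set.indicator_of_mem hx]
      have h1 : (1:ℝ) ≤ ‖x‖ := by simpa using hx
      have hnn : (‖R • x‖₊ : ℝ≥0∞) = ENNReal.ofReal R * (‖x‖₊ : ℝ≥0∞) := by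
        rw [← enorm_eq_nnnorm, ← enorm_eq_nnnorm, ← ofReal_norm, ← ofReal_norm, norm_smul,
          Real.norm_eq_abs, abs_of_pos hR, ENNReal.ofReal_mul hR.le]
      have hx0 : x ≠ 0 := fun h => by rw [h] at h1; simp at h1; linarith
      rw [hnn, ENNReal.mul_rpow_of_ne_zero (by simpa using hR)
        (by simp only [ne_eq, ENNReal.coe_eq_zero, nnnorm_eq_zero]; exact hx0)]
    · rw [Set.indicator_of_notMem (fun h => hx (hmem.1 h)), Set.indicator_of_notMem hx, mul_zero]
  have hc1 : (∫⁻ x : E3, ((ball (0:E3) R)ᶜ).indicator (fun x => (‖x‖₊ : ℝ≥0∞) ^ (-r)) (R • x) ∂volume)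
      = ENNReal.ofReal R ^ (-r) *
        ∫⁻ x : E3, ((ball (0:E3) 1)ᶜ).indicator (fun x => (‖x‖₊ : ℝ≥0∞) ^ (-r)) x ∂volume := by
    simp_rw [hpt]
    exact lintegral_const_mul' _ _ (by
      simp [ENNReal.rpow_eq_top_iff, hR, hR.not_ge])
  have hR0 : ENNReal.ofReal R ≠ 0 := by simpa using hR
  have hRt : ENNReal.ofReal R ≠ ∞ := ENNReal.ofReal_ne_top
  have hmain := hlm.symm.trans hc1
  -- hmain : ofReal (R^3)⁻¹ * I_R = ofReal R ^ (-r) * I_1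
  have h3 : ENNReal.ofReal ((R ^ 3)⁻¹) = (ENNReal.ofReal R ^ (3:ℝ))⁻¹ := by
    rw [ENNReal.ofReal_rpow_of_pos hR, ← ENNReal.ofReal_inv_of_pos (by positivity)]
    congr 1
    rw [← Real.rpow_natCast R 3]
    norm_num
  rw [h3] at hmain
  have := congrArg (fun z => ENNReal.ofReal R ^ (3:ℝ) * z) hmain
  simp only [← mul_assoc] at this
  rw [ENNReal.mul_inv_cancel (by simp [ENNReal.rpow_eq_zero_iff, hR, hR.not_ge])
      (ENNReal.rpow_ne_top_of_nonneg (by norm_num) hRt),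
    one_mul] at this
  rw [this, ← ENNReal.rpow_add _ _ hR0 hRt]
  norm_num [sub_eq_add_neg]
lemma aux_outer_phi {r R : ℝ} (hr : 0 < r) (hR : 0 < R) :
    eLpNorm (fun x : E3 => ((‖x‖⁻¹ : ℝ) : ℂ)) (ENNReal.ofReal r)
        (volume.restrict (ball (0:E3) R)ᶜ)
      = (∫⁻ x : E3, ((ball (0:E3) R)ᶜ).indicator
          (fun x => (‖x‖₊ : ℝ≥0∞) ^ (-r)) x ∂volume) ^ (1/r) := by
  rw [eLpNorm_eq_lintegral_rpow_enorm_toReal (by simpa using hr) ENNReal.ofReal_ne_top,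
    ENNReal.toReal_ofReal hr.le, ← lintegral_indicator measurableSet_ball.compl]
  congr 1
  refine lintegral_congr fun x => ?_
  by_cases hx : x ∈ (ball (0:E3) R)ᶜ
  · rw [Set.indicator_of_mem hx, Set.indicator_of_mem hx]
    have hxR : R ≤ ‖x‖ := by simpa [mem_ball_zero_iff] using hx
    have hx0 : ‖x‖₊ ≠ 0 := by
      simp only [ne_eq, nnnorm_eq_zero]
      intro h; rw [h] at hxR; simp at hxR; linarith
    rw [enorm_eq_nnnorm, Complex.nnnorm_real, nnnorm_inv, nnnorm_norm, ENNReal.coe_inv hx0,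
      ENNReal.inv_rpow, ← ENNReal.rpow_neg]
  · simp [Set.indicator_of_notMem hx, ENNReal.zero_rpow_of_pos hr]

lemma aux_alg1 {A B : ℝ≥0∞} (hA0 : A ≠ 0) (hB0 : B ≠ 0) (hBt : B ≠ ⊤) (t : ℝ) :
    (A/B)^t * B = A^t * B^(1-t) := by
  rw [div_eq_mul_inv, ENNReal.mul_rpow_of_ne_zero hA0 (ENNReal.inv_ne_zero.2 hBt),
    ENNReal.inv_rpow, ← ENNReal.rpow_neg, mul_assoc]
  congr 1
  rw [sub_eq_add_neg, ENNReal.rpow_add _ _ hB0 hBt, ENNReal.rpow_one, mul_comm]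

lemma aux_alg2 {A B : ℝ≥0∞} (hA0 : A ≠ 0) (hAt : A ≠ ⊤) (hB0 : B ≠ 0) (hBt : B ≠ ⊤) (t : ℝ) :
    (A/B)^(t-1) * A = A^t * B^(1-t) := by
  rw [div_eq_mul_inv, ENNReal.mul_rpow_of_ne_zero hA0 (ENNReal.inv_ne_zero.2 hBt),
    ENNReal.inv_rpow, ← ENNReal.rpow_neg, neg_sub, mul_right_comm]
  congr 1
  conv_rhs => rw [show t = (t-1)+1 by ring]
  rw [ENNReal.rpow_add _ _ hA0 hAt, ENNReal.rpow_one]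

/-- Weighted interpolation inequality: `‖g‖_{L^{6/(7-2α)}} ≤ C ‖|x|g‖₂^{2-α} ‖g‖₂^{α-1}`. -/
theorem stmt_10 (α : ℝ) (hα₁ : 1 < α) (hα₂ : α < 2) :
    ∃ C : ℝ, 0 < C ∧
      ∀ g : EuclideanSpace ℝ (Fin 3) → ℂ, Measurable g →
        MemLp g 2 volume →
        MemLp (fun x => ((‖x‖ : ℝ) : ℂ) * g x) 2 volume →
        eLpNorm g (ENNReal.ofReal (6 / (7 - 2 * α))) volume ≤
          ENNReal.ofReal C *
            (eLpNorm (fun x => ((‖x‖ : ℝ) : ℂ) * g x) 2 volume) ^ (2 - α) *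
              (eLpNorm g 2 volume) ^ (α - 1) := by
  have h2α : (0:ℝ) < 2 - α := by linarith
  set q : ℝ := 7 - 2*α with hq
  have hq3 : (3:ℝ) < q := by rw [hq]; linarith
  have hq0 : (0:ℝ) < q := by linarith
  set p : ℝ := 6 / q with hp
  have hp1 : 1 < p := by rw [hp, lt_div_iff₀ hq0]; linarith
  have hp2 : p ≤ 2 := by rw [hp, div_le_iff₀ hq0]; linarith
  have hp0 : (0:ℝ) < p := by linarith
  set r : ℝ := 3 / (2 - α) with hr
  have hr3 : (3:ℝ) < r := by rw [hr, lt_div_iff₀ h2α]; nlinarith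
  have hr0 : (0:ℝ) < r := by linarith
  set V1 : ℝ≥0∞ := volume (ball (0:E3) 1) with hV1
  set c1 : ℝ≥0∞ := ∫⁻ x : E3, ((ball (0:E3) 1)ᶜ).indicator
      (fun x => (‖x‖₊ : ℝ≥0∞) ^ (-r)) x ∂volume with hc1
  set K : ℝ≥0∞ := V1 ^ ((2-α)/3) + c1 ^ (1/r) with hK
  have hVt : V1 ≠ ⊤ := measure_ball_lt_top.ne
  have hKt : K ≠ ⊤ := by
    rw [hK]
    exact (ENNReal.add_lt_top.2 ⟨ENNReal.rpow_lt_top_of_nonneg (by positivity) hVt,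
      ENNReal.rpow_lt_top_of_nonneg (by positivity) (aux_c1_lt_top hr3).ne⟩).ne
  refine ⟨K.toReal + 1, by positivity, ?_⟩
  intro g hgm hg2 hxg2
  set A := eLpNorm (fun x : E3 => ((‖x‖ : ℝ) : ℂ) * g x) 2 volume with hA
  set Bn := eLpNorm g 2 volume with hBn
  have haeX : ∀ᵐ x : E3 ∂volume, x ≠ 0 := by
    have h0 : (volume : Measure E3) {0} = 0 := measure_singleton 0
    rw [ae_iff]
    simpa using h0
  by_cases hB0 : Bn = 0
  · have hg0 : g =ᵐ[volume] 0 := (eLpNorm_eq_zero_iff hg2.1 (by norm_num)).1 hB0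
    rw [eLpNorm_congr_ae hg0, eLpNorm_zero]
    exact zero_le
  by_cases hA0 : A = 0
  · have hxg0 : (fun x : E3 => ((‖x‖:ℝ):ℂ) * g x) =ᵐ[volume] 0 :=
      (eLpNorm_eq_zero_iff hxg2.1 (by norm_num)).1 hA0
    have hg0 : g =ᵐ[volume] 0 := by
      filter_upwards [hxg0, haeX] with x hx hxne
      simp only [Pi.zero_apply, mul_eq_zero] at hx ⊢
      rcases hx with h | h
      · exfalso
        apply hxne
        have : ‖x‖ = 0 := by exact_mod_cast h
        simpa using this
      · exact h
    rw [eLpNorm_congr_ae hg0, eLpNorm_zero]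
    exact zero_le
  have hAt : A ≠ ⊤ := hxg2.2.ne
  have hBt : Bn ≠ ⊤ := hg2.2.ne
  set R : ℝ := (A / Bn).toReal with hRdef
  have hABt : A / Bn ≠ ⊤ := (ENNReal.div_lt_top hAt hB0).ne
  have hAB0 : A / Bn ≠ 0 := by simp [ENNReal.div_eq_zero_iff, hA0, hBt]
  have hR : 0 < R := ENNReal.toReal_pos hAB0 hABt
  have hoR : ENNReal.ofReal R = A / Bn := ENNReal.ofReal_toReal hABt
  set P := ENNReal.ofReal p with hP
  have hP1 : 1 ≤ P := ENNReal.one_le_ofReal.2 hp1.le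
  have hsplit : eLpNorm g P volume ≤
      eLpNorm ((ball (0:E3) R).indicator g) P volume
        + eLpNorm (((ball (0:E3) R)ᶜ).indicator g) P volume := by
    conv_lhs => rw [← Set.indicator_self_add_compl (ball (0:E3) R) g]
    exact eLpNorm_add_le (hgm.indicator measurableSet_ball).aestronglyMeasurable
      (hgm.indicator measurableSet_ball.compl).aestronglyMeasurable hP1
  have hinner : eLpNorm ((ball (0:E3) R).indicator g) P volume
      ≤ V1 ^ ((2-α)/3) * (A ^ (2-α) * Bn ^ (α-1)) := by
    rw [eLpNorm_indicator_eq_eLpNorm_restrict measurableSet_ball]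
    have h1 := eLpNorm_le_eLpNorm_mul_rpow_measure_univ
      (μ := volume.restrict (ball (0:E3) R))
      (show P ≤ 2 by
        rw [hP, show (2:ℝ≥0∞) = ENNReal.ofReal 2 by norm_num]
        exact ENNReal.ofReal_le_ofReal hp2) hg2.1.restrict
    have htr : 1 / P.toReal - 1 / (2:ℝ≥0∞).toReal = (2-α)/3 := by
      rw [hP, ENNReal.toReal_ofReal hp0.le, hp, one_div_div, hq]
      norm_num
      ring
    have hpow3 : ENNReal.ofReal (R ^ 3) = ENNReal.ofReal R ^ (3:ℝ) := by
      rw [ENNReal.ofReal_rpow_of_pos hR]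
      congr 1
      rw [← Real.rpow_natCast R 3]
      norm_num
    have hball : (volume.restrict (ball (0:E3) R)) Set.univ
        = ENNReal.ofReal R ^ (3:ℝ) * V1 := by
      rw [Measure.restrict_apply_univ, Measure.addHaar_ball _ _ hR.le,
        finrank_euclideanSpace_fin, hV1, hpow3]
    calc eLpNorm g P (volume.restrict (ball (0:E3) R))
        ≤ eLpNorm g 2 (volume.restrict (ball (0:E3) R))
            * ((volume.restrict (ball (0:E3) R)) Set.univ) ^ ((2-α)/3) := by
          rw [← htr]; exact h1
      _ ≤ Bn * ((ENNReal.ofReal R ^ (3:ℝ) * V1) ^ ((2-α)/3)) := by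
          rw [hball]
          exact mul_le_mul_left (eLpNorm_mono_measure _ Measure.restrict_le_self) _
      _ = V1 ^ ((2-α)/3) * (ENNReal.ofReal R ^ (2-α) * Bn) := by
          rw [ENNReal.mul_rpow_of_nonneg _ _ (by positivity : (0:ℝ) ≤ (2-α)/3),
            ← ENNReal.rpow_mul, show (3:ℝ) * ((2-α)/3) = 2-α by ring]
          ring
      _ = V1 ^ ((2-α)/3) * (A ^ (2-α) * Bn ^ (α-1)) := by
          rw [hoR, aux_alg1 hA0 hB0 hBt (2-α), show (1:ℝ)-(2-α) = α-1 by ring]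
  have houter : eLpNorm (((ball (0:E3) R)ᶜ).indicator g) P volume
      ≤ c1 ^ (1/r) * (A ^ (2-α) * Bn ^ (α-1)) := by
    rw [eLpNorm_indicator_eq_eLpNorm_restrict measurableSet_ball.compl]
    have hcong : eLpNorm g P (volume.restrict (ball (0:E3) R)ᶜ)
        = eLpNorm ((fun x : E3 => ((‖x‖⁻¹:ℝ):ℂ)) • (fun x : E3 => ((‖x‖:ℝ):ℂ) * g x)) P
            (volume.restrict (ball (0:E3) R)ᶜ) := by
      apply eLpNorm_congr_ae
      refine (ae_restrict_iff' measurableSet_ball.compl).2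
        (Filter.Eventually.of_forall fun x hx => ?_)
      have hxR : R ≤ ‖x‖ := by simpa [mem_ball_zero_iff] using hx
      have hx0 : ‖x‖ ≠ 0 := ne_of_gt (lt_of_lt_of_le hR hxR)
      simp only [Pi.mul_apply, Pi.smul_apply, smul_eq_mul]
      rw [← mul_assoc, ← Complex.ofReal_mul, inv_mul_cancel₀ hx0]
      simp
    have hPQR : 1 / P = 1 / ENNReal.ofReal r + 1 / 2 := by
      rw [hP, one_div, one_div, one_div, ← ENNReal.ofReal_inv_of_pos hp0,
        ← ENNReal.ofReal_inv_of_pos hr0,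
        show (2:ℝ≥0∞) = ENNReal.ofReal 2 by norm_num,
        ← ENNReal.ofReal_inv_of_pos two_pos,
        ← ENNReal.ofReal_add (by positivity) (by positivity)]
      congr 1
      rw [hp, hr, hq]
      field_simp
      ring
    have hphim : Measurable fun x : E3 => ((‖x‖⁻¹:ℝ):ℂ) :=
      Complex.measurable_ofReal.comp measurable_norm.inv
    have hHold := eLpNorm_smul_le_mul_eLpNorm
      (f := fun x : E3 => ((‖x‖:ℝ):ℂ) * g x) (φ := fun x : E3 => ((‖x‖⁻¹:ℝ):ℂ))
      (μ := volume.restrict (ball (0:E3) R)ᶜ)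
      (p := ENNReal.ofReal r) (q := 2) (r := P)
      hxg2.1.restrict hphim.aestronglyMeasurable (hpqr := ⟨by simpa only [one_div] using hPQR.symm⟩)
    rw [hcong]
    refine hHold.trans ?_
    rw [aux_outer_phi hr0 hR, aux_scaling hR, ← hc1]
    calc (ENNReal.ofReal R ^ (3-r) * c1) ^ (1/r)
          * eLpNorm (fun x : E3 => ((‖x‖:ℝ):ℂ) * g x) 2 (volume.restrict (ball (0:E3) R)ᶜ)
        ≤ (ENNReal.ofReal R ^ (3-r) * c1) ^ (1/r) * A :=
          mul_le_mul_right (eLpNorm_mono_measure _ Measure.restrict_le_self) _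
      _ = c1 ^ (1/r) * (ENNReal.ofReal R ^ ((2-α)-1) * A) := by
          rw [ENNReal.mul_rpow_of_nonneg _ _ (by positivity : (0:ℝ) ≤ 1/r),
            ← ENNReal.rpow_mul,
            show (3-r) * (1/r) = (2-α)-1 by rw [hr]; field_simp]
          ring
      _ = c1 ^ (1/r) * (A ^ (2-α) * Bn ^ (α-1)) := by
          rw [hoR, aux_alg2 hA0 hAt hB0 hBt (2-α), show (1:ℝ)-(2-α) = α-1 by ring]
  refine hsplit.trans ((add_le_add hinner houter).trans ?_)
  have hKC : K ≤ ENNReal.ofReal (K.toReal + 1) := by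
    rw [ENNReal.ofReal_add ENNReal.toReal_nonneg zero_le_one, ENNReal.ofReal_toReal hKt,
      ENNReal.ofReal_one]
    exact le_self_add
  calc V1 ^ ((2-α)/3) * (A ^ (2-α) * Bn ^ (α-1)) + c1 ^ (1/r) * (A ^ (2-α) * Bn ^ (α-1))
      = K * (A ^ (2-α) * Bn ^ (α-1)) := by rw [hK, add_mul]
    _ ≤ ENNReal.ofReal (K.toReal + 1) * (A ^ (2-α) * Bn ^ (α-1)) :=
        mul_le_mul_left hKC _
    _ = ENNReal.ofReal (K.toReal + 1) * A ^ (2-α) * Bn ^ (α-1) := by rw [mul_assoc]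
end

section
/- Let 1 < α < 2. Then sup over ξ ∈ ℝ³ of the integral ∫_{ℝ³} ‖ ‖ξ‖^(α−2)·ξ − ‖σ‖^(α−2)·σ ‖^{−2} · (1+‖σ‖)^{−10} dσ is finite; i.e. there exists C depending only on α with ∫_{ℝ³} ‖ ‖ξ‖^(α−2)·ξ − ‖σ‖^(α−2)·σ ‖^{−2} (1+‖σ‖)^{−10} dσ ≤ C for all ξ ∈ ℝ³. -/
set_option maxHeartbeats 1000000

open MeasureTheory
open scoped ENNReal

open Real Metric RealInnerProductSpace

local notation "E" => EuclideanSpace ℝ (Fin 3)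

-- Bernoulli / MVT type inequality
lemma mvt_rpow_s14 {α r s : ℝ} (hα₁ : 1 < α) (hα₂ : α < 2) (hs : 0 < s) (hsr : s ≤ r) :
    (α - 1) * r ^ (α - 2) * (r - s) ≤ r ^ (α - 2) * r - s ^ (α - 2) * s := by
  have hr : 0 < r := lt_of_lt_of_le hs hsr
  have hrr : r ^ (α - 2) * r = r ^ (α - 1) := by
    rw [← Real.rpow_add_one hr.ne' (α - 2)]; ring_nf
  have hss : s ^ (α - 2) * s = s ^ (α - 1) := by
    rw [← Real.rpow_add_one hs.ne' (α - 2)]; ring_nf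
  rw [hrr, hss]
  have hgm := Real.geom_mean_le_arith_mean2_weighted (by linarith : (0:ℝ) ≤ α - 1)
    (by linarith : (0:ℝ) ≤ 2 - α) (by positivity : (0:ℝ) ≤ s / r) (by norm_num : (0:ℝ) ≤ 1)
    (by ring : (α - 1) + (2 - α) = 1)
  rw [Real.one_rpow, mul_one, mul_one] at hgm
  -- hgm : (s / r) ^ (α - 1) ≤ (α - 1) * (s / r) + (2 - α)
  have hdiv : (s / r) ^ (α - 1) = s ^ (α - 1) / r ^ (α - 1) :=
    Real.div_rpow hs.le hr.le (α - 1)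
  have hrpos : (0:ℝ) < r ^ (α - 1) := Real.rpow_pos_of_pos hr _
  have h2 : s ^ (α - 1) ≤ ((α - 1) * (s / r) + (2 - α)) * r ^ (α - 1) := by
    calc s ^ (α - 1) = (s / r) ^ (α - 1) * r ^ (α - 1) := by
          rw [hdiv, div_mul_cancel₀]; exact hrpos.ne'
      _ ≤ ((α - 1) * (s / r) + (2 - α)) * r ^ (α - 1) := by
          exact mul_le_mul_of_nonneg_right hgm hrpos.le
  have hr1 : r ^ (α - 1) = r ^ (α - 2) * r := hrr.symm
  have hfinal : ((α - 1) * (s / r) + (2 - α)) * r ^ (α - 1)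
      = r ^ (α - 1) - (α - 1) * r ^ (α - 2) * (r - s) := by
    rw [hr1]; field_simp; ring
  linarith [h2, hfinal ▸ h2]


lemma key_aux {α : ℝ} (hα₁ : 1 < α) (hα₂ : α < 2) (ξ σ : E) (hsr : ‖σ‖ ≤ ‖ξ‖) :
    (α - 1) * (max ‖ξ‖ ‖σ‖) ^ (α - 2) * ‖ξ - σ‖ ≤
      ‖(‖ξ‖ ^ (α - 2)) • ξ - (‖σ‖ ^ (α - 2)) • σ‖ := by
  have hc0 : 0 < α - 1 := by linarith
  have hc1 : α - 1 ≤ 1 := by linarith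
  rcases eq_or_ne ξ σ with rfl | hne
  · simp
  rw [max_eq_left hsr]
  set r := ‖ξ‖ with hr
  set s := ‖σ‖ with hs
  have hs0 : 0 ≤ s := norm_nonneg _
  have hr0 : 0 ≤ r := norm_nonneg _
  have hrpos : 0 < r := by
    rcases hr0.lt_or_eq with h | h
    · exact h
    · exfalso; apply hne
      have hξ0 : ξ = 0 := norm_eq_zero.mp h.symm
      have hσ0 : σ = 0 := norm_eq_zero.mp (le_antisymm (h ▸ hsr) hs0)
      rw [hξ0, hσ0]
  set u := r ^ (α - 2) with hu
  set v := s ^ (α - 2) with hv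
  have hupos : 0 < u := Real.rpow_pos_of_pos hrpos _
  have hv0 : 0 ≤ v := Real.rpow_nonneg hs0 _
  set I : ℝ := ⟪ξ, σ⟫ with hI
  have hIle : I ≤ r * s := real_inner_le_norm ξ σ
  have hnξ : ‖u • ξ‖ = u * r := by
    rw [norm_smul, Real.norm_eq_abs, abs_of_nonneg hupos.le]
  have hnσ : ‖v • σ‖ = v * s := by
    rw [norm_smul, Real.norm_eq_abs, abs_of_nonneg hv0]
  have hinner : ⟪u • ξ, v • σ⟫ = u * v * I := by
    rw [real_inner_smul_left, real_inner_smul_right]; ring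
  have hsq1 : ‖u • ξ - v • σ‖ ^ 2 = (u*r)^2 - 2*(u*v*I) + (v*s)^2 := by
    rw [@norm_sub_sq_real, hnξ, hnσ, hinner]
  have hsq2 : ‖ξ - σ‖ ^ 2 = r^2 - 2*I + s^2 := by
    rw [@norm_sub_sq_real]
  have hmain : ((α - 1) * u * ‖ξ - σ‖) ^ 2 ≤ ‖u • ξ - v • σ‖ ^ 2 := by
    have hexp : ((α-1) * u * ‖ξ - σ‖)^2 = (α-1)^2 * u^2 * ‖ξ - σ‖^2 := by ring
    rw [hsq1, hexp, hsq2]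
    rcases hs0.lt_or_eq with hspos | h0
    · have hvu : u ≤ v := Real.rpow_le_rpow_of_nonpos hspos hsr (by linarith)
      have hmvt : (α - 1) * u * (r - s) ≤ u * r - v * s := mvt_rpow_s14 hα₁ hα₂ hspos hsr
      have hmvt0 : 0 ≤ (α - 1) * u * (r - s) := by
        apply mul_nonneg (mul_nonneg hc0.le hupos.le); linarith
      have h1 : (α-1)^2 ≤ 1 := by nlinarith
      have huv : (α-1)^2 * u^2 ≤ u * v := by
        nlinarith [mul_le_mul_of_nonneg_left hvu hupos.le,
          mul_le_mul_of_nonneg_right h1 (sq_nonneg u)]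
      have hA : ((α-1)*u*(r-s))^2 ≤ (u*r - v*s)^2 := pow_le_pow_left₀ hmvt0 hmvt 2
      have hB : 0 ≤ (u*v - (α-1)^2*u^2) * (r*s - I) :=
        mul_nonneg (sub_nonneg.mpr huv) (sub_nonneg.mpr hIle)
      nlinarith [hA, hB]
    · have hs' : s = 0 := h0.symm
      have hσ : σ = 0 := norm_eq_zero.mp (by rw [← hs, hs'])
      have hI0 : I = 0 := by rw [hI, hσ, inner_zero_right]
      have hv' : v = 0 := by
        rw [hv, hs', Real.zero_rpow (by linarith : α - 2 ≠ 0)]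
      rw [hs', hI0, hv']
      have h1 : (α-1)^2 ≤ 1 := by nlinarith
      have h2 : 0 ≤ (u*r)^2 := sq_nonneg _
      nlinarith [mul_le_mul_of_nonneg_right h1 h2]
  have hL0 : 0 ≤ (α - 1) * u * ‖ξ - σ‖ := by positivity
  calc (α - 1) * u * ‖ξ - σ‖ = Real.sqrt (((α - 1) * u * ‖ξ - σ‖) ^ 2) :=
        (Real.sqrt_sq hL0).symm
    _ ≤ Real.sqrt (‖u • ξ - v • σ‖ ^ 2) := Real.sqrt_le_sqrt hmain
    _ = ‖u • ξ - v • σ‖ := Real.sqrt_sq (norm_nonneg _)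


lemma key {α : ℝ} (hα₁ : 1 < α) (hα₂ : α < 2) (ξ σ : E) :
    (α - 1) * (max ‖ξ‖ ‖σ‖) ^ (α - 2) * ‖σ - ξ‖ ≤
      ‖(‖ξ‖ ^ (α - 2)) • ξ - (‖σ‖ ^ (α - 2)) • σ‖ := by
  rcases le_total ‖σ‖ ‖ξ‖ with h | h
  · rw [norm_sub_rev σ ξ]
    exact key_aux hα₁ hα₂ ξ σ h
  · have h2 := key_aux hα₁ hα₂ σ ξ h
    rw [max_comm, norm_sub_rev ((‖ξ‖ ^ (α - 2)) • ξ) ((‖σ‖ ^ (α - 2)) • σ)]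
    exact h2

lemma master {α : ℝ} (hα₁ : 1 < α) (hα₂ : α < 2) (ξ σ : E) :
    ‖(‖ξ‖ ^ (α - 2)) • ξ - (‖σ‖ ^ (α - 2)) • σ‖ ^ (-2:ℝ) * (1 + ‖σ‖) ^ (-10:ℝ) ≤
      ((α-1) ^ (-2:ℝ) * 256 * (1 + ‖ξ‖) ^ (-6:ℝ)) *
        (ball ξ ((1 + ‖ξ‖)/2)).indicator (fun τ => ‖τ - ξ‖ ^ (-2:ℝ)) σ
      + (4 * (α-1) ^ (-2:ℝ)) * (1 + ‖σ‖) ^ (-8:ℝ) := by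
  set R := ‖ξ‖ with hR
  set s := ‖σ‖ with hs
  set t := ‖σ - ξ‖ with ht
  set b := 1 + R with hb
  set c := α - 1 with hc
  have hR0 : 0 ≤ R := norm_nonneg _
  have hs0 : 0 ≤ s := norm_nonneg _
  have ht0 : 0 ≤ t := norm_nonneg _
  have hb1 : 1 ≤ b := by simp [hb]; linarith
  have hb0 : 0 < b := lt_of_lt_of_le one_pos hb1
  have hc0 : 0 < c := by simp [hc]; linarith
  have hs1 : (0:ℝ) < 1 + s := by linarith
  -- step A : main upper bound on the first factor
  have H : ‖(‖ξ‖ ^ (α - 2)) • ξ - (‖σ‖ ^ (α - 2)) • σ‖ ^ (-2:ℝ)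
      ≤ c ^ (-2:ℝ) * (b ^ (2:ℝ) * (1 + s) ^ (2:ℝ)) * t ^ (-2:ℝ) := by
    rcases eq_or_ne σ ξ with rfl | hne
    · rw [sub_self, norm_zero, Real.zero_rpow (by norm_num : (-2:ℝ) ≠ 0)]
      positivity
    · have htpos : 0 < t := by
        rw [ht]; exact norm_sub_pos_iff.mpr hne
      set M := max R s with hM
      have hMpos : 0 < M := by
        rcases lt_or_ge 0 R with h | h
        · exact lt_of_lt_of_le h (le_max_left _ _)
        · have hR' : R = 0 := le_antisymm h hR0
          have hξ0 : ξ = 0 := norm_eq_zero.mp (by rw [← hR, hR'])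
          have hσ0 : σ ≠ 0 := by rw [hξ0] at hne; exact hne
          have : 0 < s := by rw [hs]; exact norm_pos_iff.mpr hσ0
          exact lt_of_lt_of_le this (le_max_right _ _)
      have hMα : 0 < M ^ (α - 2) := Real.rpow_pos_of_pos hMpos _
      have hbase : 0 < c * M ^ (α - 2) * t := by positivity
      have h1 : ‖(‖ξ‖ ^ (α - 2)) • ξ - (‖σ‖ ^ (α - 2)) • σ‖ ^ (-2:ℝ)
          ≤ (c * M ^ (α - 2) * t) ^ (-2:ℝ) :=
        Real.rpow_le_rpow_of_nonpos hbase (key hα₁ hα₂ ξ σ) (by norm_num)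
      have h2 : (c * M ^ (α - 2) * t) ^ (-2:ℝ)
          = c ^ (-2:ℝ) * (M ^ (α - 2)) ^ (-2:ℝ) * t ^ (-2:ℝ) := by
        rw [Real.mul_rpow (by positivity) ht0, Real.mul_rpow hc0.le hMα.le]
      have h3 : (M ^ (α - 2)) ^ (-2:ℝ) = M ^ ((α - 2) * (-2:ℝ)) :=
        (Real.rpow_mul hMpos.le _ _).symm
      have hMle : M ≤ b * (1 + s) := by
        apply max_le
        · nlinarith
        · nlinarith
      have h4 : M ^ ((α - 2) * (-2:ℝ)) ≤ (b * (1 + s)) ^ (2:ℝ) := by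
        calc M ^ ((α - 2) * (-2:ℝ)) ≤ (b * (1 + s)) ^ ((α - 2) * (-2:ℝ)) :=
              Real.rpow_le_rpow hMpos.le hMle (by nlinarith)
          _ ≤ (b * (1 + s)) ^ (2:ℝ) := by
              apply Real.rpow_le_rpow_of_exponent_le
              · nlinarith
              · nlinarith
      have h5 : (b * (1 + s)) ^ (2:ℝ) = b ^ (2:ℝ) * (1 + s) ^ (2:ℝ) :=
        Real.mul_rpow hb0.le hs1.le
      calc ‖(‖ξ‖ ^ (α - 2)) • ξ - (‖σ‖ ^ (α - 2)) • σ‖ ^ (-2:ℝ)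
          ≤ (c * M ^ (α - 2) * t) ^ (-2:ℝ) := h1
        _ = c ^ (-2:ℝ) * (M ^ (α - 2)) ^ (-2:ℝ) * t ^ (-2:ℝ) := h2
        _ ≤ c ^ (-2:ℝ) * (b ^ (2:ℝ) * (1 + s) ^ (2:ℝ)) * t ^ (-2:ℝ) := by
            apply mul_le_mul_of_nonneg_right _ (by positivity)
            apply mul_le_mul_of_nonneg_left _ (by positivity)
            rw [h3, ← h5]; exact h4
  -- multiply by (1+s)^{-10}
  have H2 : ‖(‖ξ‖ ^ (α - 2)) • ξ - (‖σ‖ ^ (α - 2)) • σ‖ ^ (-2:ℝ) * (1 + s) ^ (-10:ℝ)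
      ≤ c ^ (-2:ℝ) * b ^ (2:ℝ) * ((1 + s) ^ (-8:ℝ) * t ^ (-2:ℝ)) := by
    have := mul_le_mul_of_nonneg_right H (by positivity : (0:ℝ) ≤ (1 + s) ^ (-10:ℝ))
    calc ‖(‖ξ‖ ^ (α - 2)) • ξ - (‖σ‖ ^ (α - 2)) • σ‖ ^ (-2:ℝ) * (1 + s) ^ (-10:ℝ)
        ≤ c ^ (-2:ℝ) * (b ^ (2:ℝ) * (1 + s) ^ (2:ℝ)) * t ^ (-2:ℝ) * (1 + s) ^ (-10:ℝ) := this
      _ = c ^ (-2:ℝ) * b ^ (2:ℝ) * (((1 + s) ^ (2:ℝ) * (1 + s) ^ (-10:ℝ)) * t ^ (-2:ℝ)) := by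
          ring
      _ = c ^ (-2:ℝ) * b ^ (2:ℝ) * ((1 + s) ^ (-8:ℝ) * t ^ (-2:ℝ)) := by
          rw [← Real.rpow_add hs1]; norm_num
  by_cases hmem : σ ∈ ball ξ ((1 + ‖ξ‖)/2)
  · rw [Set.indicator_of_mem hmem]
    have hdist : ‖σ - ξ‖ < b / 2 := by
      rw [← dist_eq_norm]; exact mem_ball.mp hmem
    have hslb : b / 2 ≤ 1 + s := by
      have : R - t ≤ s := by
        rw [hR, hs, ht]
        have := norm_sub_norm_le ξ σ
        have h' := norm_sub_rev σ ξ
        linarith [norm_sub_norm_le ξ σ, (norm_sub_rev σ ξ).le]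
      have : R - b/2 ≤ s := by linarith [hdist.le, this]
      simp only [hb] at *
      linarith
    have hkey2 : (1 + s) ^ (-8:ℝ) ≤ 256 * b ^ (-8:ℝ) := by
      have h1 : (1 + s) ^ (-8:ℝ) ≤ (b / 2) ^ (-8:ℝ) :=
        Real.rpow_le_rpow_of_nonpos (by positivity) hslb (by norm_num)
      have h2 : (b / 2) ^ (-8:ℝ) = b ^ (-8:ℝ) / (2:ℝ) ^ (-8:ℝ) :=
        Real.div_rpow hb0.le (by norm_num) _
      have h3 : (2:ℝ) ^ (-8:ℝ) = 256⁻¹ := by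
        rw [show (-8:ℝ) = ((-8:ℤ):ℝ) by norm_num, Real.rpow_intCast]
        norm_num
      rw [h2, h3] at h1
      calc (1 + s) ^ (-8:ℝ) ≤ b ^ (-8:ℝ) / 256⁻¹ := h1
        _ = 256 * b ^ (-8:ℝ) := by ring
    have hb28 : b ^ (2:ℝ) * b ^ (-8:ℝ) = b ^ (-6:ℝ) := by
      rw [← Real.rpow_add hb0]; norm_num
    have hfirst : c ^ (-2:ℝ) * b ^ (2:ℝ) * ((1 + s) ^ (-8:ℝ) * t ^ (-2:ℝ))
        ≤ (c ^ (-2:ℝ) * 256 * b ^ (-6:ℝ)) * t ^ (-2:ℝ) := by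
      have := mul_le_mul_of_nonneg_right hkey2 (by positivity : (0:ℝ) ≤ t ^ (-2:ℝ))
      calc c ^ (-2:ℝ) * b ^ (2:ℝ) * ((1 + s) ^ (-8:ℝ) * t ^ (-2:ℝ))
          ≤ c ^ (-2:ℝ) * b ^ (2:ℝ) * (256 * b ^ (-8:ℝ) * t ^ (-2:ℝ)) := by
            apply mul_le_mul_of_nonneg_left _ (by positivity)
            exact this
        _ = (c ^ (-2:ℝ) * 256 * (b ^ (2:ℝ) * b ^ (-8:ℝ))) * t ^ (-2:ℝ) := by ring
        _ = (c ^ (-2:ℝ) * 256 * b ^ (-6:ℝ)) * t ^ (-2:ℝ) := by rw [hb28]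
    have hpos2 : (0:ℝ) ≤ 4 * c ^ (-2:ℝ) * (1 + s) ^ (-8:ℝ) := by positivity
    calc ‖(‖ξ‖ ^ (α - 2)) • ξ - (‖σ‖ ^ (α - 2)) • σ‖ ^ (-2:ℝ) * (1 + s) ^ (-10:ℝ)
        ≤ c ^ (-2:ℝ) * b ^ (2:ℝ) * ((1 + s) ^ (-8:ℝ) * t ^ (-2:ℝ)) := H2
      _ ≤ (c ^ (-2:ℝ) * 256 * b ^ (-6:ℝ)) * t ^ (-2:ℝ) := hfirst
      _ ≤ _ := le_add_of_nonneg_right hpos2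
  · rw [Set.indicator_of_notMem hmem]
    have hdist : b / 2 ≤ t := by
      rw [ht, ← dist_eq_norm]
      exact not_lt.mp (fun h => hmem (mem_ball.mpr h))
    have hkey2 : t ^ (-2:ℝ) ≤ 4 * b ^ (-2:ℝ) := by
      have h1 : t ^ (-2:ℝ) ≤ (b / 2) ^ (-2:ℝ) :=
        Real.rpow_le_rpow_of_nonpos (by positivity) hdist (by norm_num)
      have h2 : (b / 2) ^ (-2:ℝ) = b ^ (-2:ℝ) / (2:ℝ) ^ (-2:ℝ) :=
        Real.div_rpow hb0.le (by norm_num) _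
      have h3 : (2:ℝ) ^ (-2:ℝ) = 4⁻¹ := by
        rw [show (-2:ℝ) = ((-2:ℤ):ℝ) by norm_num, Real.rpow_intCast]
        norm_num
      rw [h2, h3] at h1
      calc t ^ (-2:ℝ) ≤ b ^ (-2:ℝ) / 4⁻¹ := h1
        _ = 4 * b ^ (-2:ℝ) := by ring
    have hb22 : b ^ (2:ℝ) * b ^ (-2:ℝ) = 1 := by
      rw [← Real.rpow_add hb0]; norm_num
    calc ‖(‖ξ‖ ^ (α - 2)) • ξ - (‖σ‖ ^ (α - 2)) • σ‖ ^ (-2:ℝ) * (1 + s) ^ (-10:ℝ)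
        ≤ c ^ (-2:ℝ) * b ^ (2:ℝ) * ((1 + s) ^ (-8:ℝ) * t ^ (-2:ℝ)) := H2
      _ ≤ c ^ (-2:ℝ) * b ^ (2:ℝ) * ((1 + s) ^ (-8:ℝ) * (4 * b ^ (-2:ℝ))) := by
          apply mul_le_mul_of_nonneg_left _ (by positivity)
          exact mul_le_mul_of_nonneg_left hkey2 (by positivity)
      _ = (4 * c ^ (-2:ℝ)) * (1 + s) ^ (-8:ℝ) * (b ^ (2:ℝ) * b ^ (-2:ℝ)) := by ring
      _ = (4 * c ^ (-2:ℝ)) * (1 + s) ^ (-8:ℝ) := by rw [hb22, mul_one]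
      _ ≤ _ := le_add_of_nonneg_left (mul_nonneg (by positivity) (by positivity))


lemma pow_rpow_neg_two (k : ℕ) : ((2⁻¹:ℝ)^k) ^ (-2:ℝ) = 4^k := by
  rw [← Real.rpow_natCast (2⁻¹:ℝ) k, ← Real.rpow_mul (by norm_num)]
  rw [show (2⁻¹:ℝ) = 2 ^ (-1:ℝ) by rw [Real.rpow_neg_one], ← Real.rpow_mul (by norm_num)]
  rw [show (-1:ℝ) * ((k:ℝ) * (-2)) = ((2*k:ℕ):ℝ) by push_cast; ring, Real.rpow_natCast]
  rw [pow_mul]; norm_num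

lemma Jfin : (∫⁻ y : E in ball (0:E) 1, ENNReal.ofReal (‖y‖ ^ (-2:ℝ))) < ∞ := by
  set f : E → ℝ≥0∞ := fun y => ENNReal.ofReal (‖y‖ ^ (-2:ℝ)) with hf
  set A : ℕ → Set E := fun k => closedBall (0:E) ((2⁻¹:ℝ)^k) \ closedBall 0 ((2⁻¹:ℝ)^(k+1))
    with hA
  have hcover : ball (0:E) 1 ⊆ {0} ∪ ⋃ k, A k := by
    intro y hy
    rcases eq_or_ne y 0 with rfl | hy0
    · exact Set.mem_union_left _ rfl
    · refine Set.mem_union_right _ ?_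
      have hn : 0 < ‖y‖ := norm_pos_iff.mpr hy0
      have hex : ∃ n : ℕ, (2⁻¹:ℝ)^n < ‖y‖ := exists_pow_lt_of_lt_one hn (by norm_num)
      classical
      set n₀ := Nat.find hex with hn₀
      have hspec : (2⁻¹:ℝ)^n₀ < ‖y‖ := Nat.find_spec hex
      have hne0 : n₀ ≠ 0 := by
        intro h
        rw [h, pow_zero] at hspec
        have hlt : ‖y‖ < 1 := mem_ball_zero_iff.mp hy
        linarith
      obtain ⟨m, hm⟩ : ∃ m, n₀ = m + 1 := ⟨n₀ - 1, (Nat.succ_pred_eq_of_pos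
        (Nat.pos_of_ne_zero hne0)).symm⟩
      have hub : ¬ ((2⁻¹:ℝ)^m < ‖y‖) := by
        have := Nat.find_min hex (m := m) (by omega)
        exact this
      refine Set.mem_iUnion.mpr ⟨m, ?_⟩
      constructor
      · exact mem_closedBall_zero_iff.mpr (not_lt.mp hub)
      · intro hmem
        rw [← hm] at hmem
        exact absurd (mem_closedBall_zero_iff.mp hmem) (not_le.mpr hspec)
  have hmeasA : ∀ k, MeasurableSet (A k) := fun k =>
    (measurableSet_closedBall).diff measurableSet_closedBall
  set V : ℝ≥0∞ := volume (ball (0:E) 1) with hV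
  have hVfin : V < ∞ := measure_ball_lt_top
  have hbound : ∀ k, (∫⁻ y in A k, f y) ≤ ENNReal.ofReal 4 * ENNReal.ofReal ((2⁻¹:ℝ)^k) * V := by
    intro k
    have hle : ∀ y ∈ A k, f y ≤ ENNReal.ofReal (4^(k+1)) := by
      intro y hy
      have h1 : (2⁻¹:ℝ)^(k+1) ≤ ‖y‖ := by
        by_contra h
        exact hy.2 (mem_closedBall_zero_iff.mpr (not_le.mp h).le)
      have hpos : (0:ℝ) < (2⁻¹:ℝ)^(k+1) := by positivity
      have h2 : ‖y‖ ^ (-2:ℝ) ≤ ((2⁻¹:ℝ)^(k+1)) ^ (-2:ℝ) :=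
        Real.rpow_le_rpow_of_nonpos hpos h1 (by norm_num)
      rw [pow_rpow_neg_two] at h2
      exact ENNReal.ofReal_le_ofReal h2
    calc (∫⁻ y in A k, f y) ≤ ∫⁻ _ in A k, ENNReal.ofReal (4^(k+1)) :=
          setLIntegral_mono' (hmeasA k) hle
      _ = ENNReal.ofReal (4^(k+1)) * volume (A k) := setLIntegral_const _ _
      _ ≤ ENNReal.ofReal (4^(k+1)) * volume (closedBall (0:E) ((2⁻¹:ℝ)^k)) := by
          gcongr
          exact Set.diff_subset
      _ = ENNReal.ofReal (4^(k+1)) * (ENNReal.ofReal (((2⁻¹:ℝ)^k) ^ Module.finrank ℝ E) * V) := by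
          rw [Measure.addHaar_closedBall _ _ (by positivity)]
      _ = ENNReal.ofReal 4 * ENNReal.ofReal ((2⁻¹:ℝ)^k) * V := by
          rw [← ENNReal.ofReal_mul (by positivity), ← mul_assoc,
            ← ENNReal.ofReal_mul (by positivity)]
          congr 2
          have h3 : Module.finrank ℝ E = 3 := by simp [finrank_euclideanSpace]
          rw [h3, ← pow_mul, mul_comm k 3, pow_mul,
            show ((2⁻¹:ℝ)^3 : ℝ) = 8⁻¹ by norm_num,
            show (4:ℝ)^(k+1) = 4 * 4^k by ring, mul_assoc, ← mul_pow]
          norm_num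
  calc (∫⁻ y in ball (0:E) 1, f y) ≤ ∫⁻ y in ({0} ∪ ⋃ k, A k : Set E), f y :=
        lintegral_mono_set hcover
    _ ≤ (∫⁻ y in ({0}: Set E), f y) + ∫⁻ y in (⋃ k, A k), f y := lintegral_union_le _ _ _
    _ ≤ 0 + ∑' k, ∫⁻ y in A k, f y := by
        gcongr
        · exact le_of_eq (setLIntegral_measure_zero _ _ (measure_singleton 0))
        · exact lintegral_iUnion_le _ _
    _ ≤ 0 + ∑' k : ℕ, ENNReal.ofReal 4 * ENNReal.ofReal ((2⁻¹:ℝ)^k) * V := by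
        gcongr with k
        exact hbound k
    _ < ∞ := by
        rw [zero_add]
        have hterm : ∀ k : ℕ, ENNReal.ofReal 4 * ENNReal.ofReal ((2⁻¹:ℝ)^k) * V
            = (ENNReal.ofReal 4 * V) * (ENNReal.ofReal (2⁻¹:ℝ))^k := by
          intro k; rw [ENNReal.ofReal_pow (by norm_num)]; ring
        simp_rw [hterm]
        rw [ENNReal.tsum_mul_left, ENNReal.tsum_geometric]
        apply ENNReal.mul_lt_top
        · exact ENNReal.mul_lt_top ENNReal.ofReal_lt_top hVfin
        · rw [ENNReal.inv_lt_top]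
          rw [tsub_pos_iff_lt]
          rw [show (1:ℝ≥0∞) = ENNReal.ofReal 1 by simp]
          exact (ENNReal.ofReal_lt_ofReal_iff (by norm_num)).mpr (by norm_num)


/-- Uniform bound `∫ ‖ ‖ξ‖^{α-2}ξ − ‖σ‖^{α-2}σ ‖⁻² (1+‖σ‖)⁻¹⁰ dσ ≤ C`, used to show
that the phase correction `B_α` is well defined. -/
theorem stmt_14 (α : ℝ) (hα₁ : 1 < α) (hα₂ : α < 2) :
    ∃ C : ℝ, 0 < C ∧
      ∀ ξ : EuclideanSpace ℝ (Fin 3),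
        (∫⁻ σ : EuclideanSpace ℝ (Fin 3),
            ENNReal.ofReal
              (‖(‖ξ‖ ^ (α - 2)) • ξ - (‖σ‖ ^ (α - 2)) • σ‖ ^ (-2 : ℝ) *
                (1 + ‖σ‖) ^ (-10 : ℝ))) ≤ ENNReal.ofReal C := by
  have hc0 : (0:ℝ) < α - 1 := by linarith
  set c := α - 1 with hcdef
  set J : ℝ≥0∞ := ∫⁻ y : E in ball (0:E) 1, ENNReal.ofReal (‖y‖ ^ (-2:ℝ)) with hJ
  set A8 : ℝ≥0∞ := ∫⁻ σ : E, ENNReal.ofReal ((1 + ‖σ‖) ^ (-8:ℝ)) with hA8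
  set V : ℝ≥0∞ := volume (ball (0:E) 1) with hV
  have hJfin : J < ∞ := Jfin
  have hA8fin : A8 < ∞ := by
    rw [hA8]
    have h38 : (Module.finrank ℝ E : ℝ) < 8 := by
      simp [finrank_euclideanSpace]; norm_num
    simpa using finite_integral_one_add_norm (μ := (volume : Measure E)) h38
  have hVfin : V < ∞ := measure_ball_lt_top
  set S : ℝ≥0∞ := ENNReal.ofReal (c ^ (-2:ℝ) * 256) * J
      + ENNReal.ofReal (c ^ (-2:ℝ) * 32) * V
      + ENNReal.ofReal (4 * c ^ (-2:ℝ)) * A8 with hS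
  have hSfin : S ≠ ∞ := by
    rw [hS]
    apply ENNReal.add_ne_top.mpr
    refine ⟨ENNReal.add_ne_top.mpr ⟨ENNReal.mul_ne_top ENNReal.ofReal_ne_top hJfin.ne,
      ENNReal.mul_ne_top ENNReal.ofReal_ne_top hVfin.ne⟩,
      ENNReal.mul_ne_top ENNReal.ofReal_ne_top hA8fin.ne⟩
  refine ⟨S.toReal + 1, by positivity, fun ξ => ?_⟩
  set R := ‖ξ‖ with hR
  set b := (1:ℝ) + R with hb
  have hR0 : (0:ℝ) ≤ R := norm_nonneg _
  have hb1 : (1:ℝ) ≤ b := by rw [hb]; linarith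
  have hb0 : (0:ℝ) < b := lt_of_lt_of_le one_pos hb1
  set ρ := b / 2 with hρ
  have hρ0 : (0:ℝ) < ρ := by positivity
  set K1 : ℝ := c ^ (-2:ℝ) * 256 * b ^ (-6:ℝ) with hK1
  have hK10 : 0 ≤ K1 := by positivity
  set G1 : E → ℝ≥0∞ := fun σ =>
    ENNReal.ofReal K1 * (ball ξ ρ).indicator (fun τ => ENNReal.ofReal (‖τ - ξ‖ ^ (-2:ℝ))) σ
    with hG1
  set G2 : E → ℝ≥0∞ := fun σ =>
    ENNReal.ofReal (4 * c ^ (-2:ℝ)) * ENNReal.ofReal ((1 + ‖σ‖) ^ (-8:ℝ)) with hG2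
  have hpt : ∀ σ : E,
      ENNReal.ofReal (‖(‖ξ‖ ^ (α - 2)) • ξ - (‖σ‖ ^ (α - 2)) • σ‖ ^ (-2 : ℝ) *
        (1 + ‖σ‖) ^ (-10 : ℝ)) ≤ G1 σ + G2 σ := by
    intro σ
    have hm := master hα₁ hα₂ ξ σ
    calc ENNReal.ofReal (‖(‖ξ‖ ^ (α - 2)) • ξ - (‖σ‖ ^ (α - 2)) • σ‖ ^ (-2 : ℝ) *
          (1 + ‖σ‖) ^ (-10 : ℝ))
        ≤ ENNReal.ofReal (K1 * (ball ξ ρ).indicator (fun τ => ‖τ - ξ‖ ^ (-2:ℝ)) σ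
            + (4 * c ^ (-2:ℝ)) * (1 + ‖σ‖) ^ (-8:ℝ)) := ENNReal.ofReal_le_ofReal hm
      _ ≤ ENNReal.ofReal (K1 * (ball ξ ρ).indicator (fun τ => ‖τ - ξ‖ ^ (-2:ℝ)) σ)
            + ENNReal.ofReal ((4 * c ^ (-2:ℝ)) * (1 + ‖σ‖) ^ (-8:ℝ)) :=
          ENNReal.ofReal_add_le
      _ = G1 σ + G2 σ := by
          rw [hG1, hG2]
          congr 1
          · rw [ENNReal.ofReal_mul hK10]
            congr 1
            by_cases h : σ ∈ ball ξ ρ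
            · rw [Set.indicator_of_mem h, Set.indicator_of_mem h]
            · rw [Set.indicator_of_notMem h, Set.indicator_of_notMem h,
                ENNReal.ofReal_zero]
          · rw [ENNReal.ofReal_mul (by positivity)]
  have hG1meas : Measurable G1 := by
    apply Measurable.const_mul
    apply Measurable.indicator _ measurableSet_ball
    fun_prop
  have hmem_iff : ∀ σ : E, σ ∈ ball ξ ρ ↔ σ - ξ ∈ ball (0:E) ρ := by
    intro σ; rw [mem_ball_iff_norm, mem_ball_zero_iff]
  have hG1int : (∫⁻ σ : E, G1 σ) ≤ ENNReal.ofReal K1 * (J + ENNReal.ofReal (ρ^3) * V) := by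
    have htrans : ∀ σ : E,
        (ball ξ ρ).indicator (fun τ => ENNReal.ofReal (‖τ - ξ‖ ^ (-2:ℝ))) σ
          = (ball (0:E) ρ).indicator (fun y => ENNReal.ofReal (‖y‖ ^ (-2:ℝ))) (σ - ξ) := by
      intro σ
      by_cases h : σ ∈ ball ξ ρ
      · rw [Set.indicator_of_mem h, Set.indicator_of_mem ((hmem_iff σ).mp h)]
      · rw [Set.indicator_of_notMem h,
          Set.indicator_of_notMem (fun hmem => h ((hmem_iff σ).mpr hmem))]
    have hptball : ∀ y : E, ENNReal.ofReal (‖y‖ ^ (-2:ℝ))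
        ≤ (ball (0:E) 1).indicator (fun y => ENNReal.ofReal (‖y‖ ^ (-2:ℝ))) y + 1 := by
      intro y
      by_cases h : y ∈ ball (0:E) 1
      · rw [Set.indicator_of_mem h]; exact le_self_add
      · rw [Set.indicator_of_notMem h, zero_add]
        have h1 : (1:ℝ) ≤ ‖y‖ := not_lt.mp (fun hh => h (mem_ball_zero_iff.mpr hh))
        calc ENNReal.ofReal (‖y‖ ^ (-2:ℝ))
            ≤ ENNReal.ofReal 1 := ENNReal.ofReal_le_ofReal
              (Real.rpow_le_one_of_one_le_of_nonpos h1 (by norm_num))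
          _ = 1 := ENNReal.ofReal_one
    have hindmeas : Measurable fun y : E =>
        (ball (0:E) 1).indicator (fun y => ENNReal.ofReal (‖y‖ ^ (-2:ℝ))) y := by
      apply Measurable.indicator _ measurableSet_ball
      fun_prop
    have hball : (∫⁻ y : E in ball (0:E) ρ, ENNReal.ofReal (‖y‖ ^ (-2:ℝ)))
        ≤ J + ENNReal.ofReal (ρ^3) * V := by
      calc (∫⁻ y : E in ball (0:E) ρ, ENNReal.ofReal (‖y‖ ^ (-2:ℝ)))
          ≤ ∫⁻ y : E in ball (0:E) ρ,
              ((ball (0:E) 1).indicator (fun y => ENNReal.ofReal (‖y‖ ^ (-2:ℝ))) y + 1) :=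
            lintegral_mono hptball
        _ = (∫⁻ y : E in ball (0:E) ρ,
              (ball (0:E) 1).indicator (fun y => ENNReal.ofReal (‖y‖ ^ (-2:ℝ))) y)
            + ∫⁻ _ : E in ball (0:E) ρ, (1:ℝ≥0∞) := lintegral_add_left hindmeas _
        _ ≤ (∫⁻ y : E, (ball (0:E) 1).indicator (fun y => ENNReal.ofReal (‖y‖ ^ (-2:ℝ))) y)
            + volume (ball (0:E) ρ) := by
            gcongr
            · exact Measure.restrict_le_self
            · rw [setLIntegral_one]
        _ = J + ENNReal.ofReal (ρ^3) * V := by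
            congr 1
            · rw [lintegral_indicator measurableSet_ball]
            · rw [Measure.addHaar_ball _ _ hρ0.le]
              congr 2
              simp [finrank_euclideanSpace]
    calc (∫⁻ σ : E, G1 σ)
        = ENNReal.ofReal K1 * ∫⁻ σ : E,
            (ball ξ ρ).indicator (fun τ => ENNReal.ofReal (‖τ - ξ‖ ^ (-2:ℝ))) σ :=
          lintegral_const_mul' _ _ ENNReal.ofReal_ne_top
      _ = ENNReal.ofReal K1 * ∫⁻ σ : E,
            (ball (0:E) ρ).indicator (fun y => ENNReal.ofReal (‖y‖ ^ (-2:ℝ))) (σ - ξ) := by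
          congr 1
          exact lintegral_congr htrans
      _ = ENNReal.ofReal K1 * ∫⁻ y : E,
            (ball (0:E) ρ).indicator (fun y => ENNReal.ofReal (‖y‖ ^ (-2:ℝ))) y := by
          congr 1
          exact lintegral_sub_right_eq_self
            ((ball (0:E) ρ).indicator fun y => ENNReal.ofReal (‖y‖ ^ (-2:ℝ))) ξ
      _ = ENNReal.ofReal K1 * ∫⁻ y : E in ball (0:E) ρ, ENNReal.ofReal (‖y‖ ^ (-2:ℝ)) := by
          rw [lintegral_indicator measurableSet_ball]
      _ ≤ ENNReal.ofReal K1 * (J + ENNReal.ofReal (ρ^3) * V) := by gcongr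
  have hG2int : (∫⁻ σ : E, G2 σ) = ENNReal.ofReal (4 * c ^ (-2:ℝ)) * A8 :=
    lintegral_const_mul' _ _ ENNReal.ofReal_ne_top
  -- numeric collapse
  have hbneg6 : b ^ (-6:ℝ) ≤ 1 := Real.rpow_le_one_of_one_le_of_nonpos hb1 (by norm_num)
  have hK1le : K1 ≤ c ^ (-2:ℝ) * 256 := by
    rw [hK1]
    nlinarith [Real.rpow_nonneg (le_of_lt (by positivity : (0:ℝ) < c)) (-2:ℝ),
      Real.rpow_nonneg hb0.le (-6:ℝ)]
  have hK1ρle : K1 * ρ^3 ≤ c ^ (-2:ℝ) * 32 := by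
    have h3 : b ^ (-6:ℝ) * b^3 = b ^ (-3:ℝ) := by
      rw [← Real.rpow_natCast b 3, ← Real.rpow_add hb0]
      norm_num
    have hb3 : b ^ (-3:ℝ) ≤ 1 := Real.rpow_le_one_of_one_le_of_nonpos hb1 (by norm_num)
    have hexp : K1 * ρ^3 = c ^ (-2:ℝ) * 32 * (b ^ (-6:ℝ) * b^3) := by
      rw [hK1, hρ]; ring
    rw [hexp, h3]
    nlinarith [Real.rpow_nonneg (le_of_lt (by positivity : (0:ℝ) < c)) (-2:ℝ)]
  calc (∫⁻ σ : E, ENNReal.ofReal (‖(‖ξ‖ ^ (α - 2)) • ξ - (‖σ‖ ^ (α - 2)) • σ‖ ^ (-2 : ℝ) *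
          (1 + ‖σ‖) ^ (-10 : ℝ)))
      ≤ ∫⁻ σ : E, (G1 σ + G2 σ) := lintegral_mono hpt
    _ = (∫⁻ σ : E, G1 σ) + ∫⁻ σ : E, G2 σ := lintegral_add_left hG1meas _
    _ ≤ ENNReal.ofReal K1 * (J + ENNReal.ofReal (ρ^3) * V)
        + ENNReal.ofReal (4 * c ^ (-2:ℝ)) * A8 := by
        rw [hG2int]; gcongr
    _ = ENNReal.ofReal K1 * J + ENNReal.ofReal (K1 * ρ^3) * V
        + ENNReal.ofReal (4 * c ^ (-2:ℝ)) * A8 := by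
        rw [mul_add, ← mul_assoc, ← ENNReal.ofReal_mul hK10]
    _ ≤ S := by
        rw [hS]
        exact add_le_add (add_le_add
          (mul_le_mul_left (ENNReal.ofReal_le_ofReal hK1le) J)
          (mul_le_mul_left (ENNReal.ofReal_le_ofReal hK1ρle) V)) le_rfl
    _ = ENNReal.ofReal S.toReal := (ENNReal.ofReal_toReal hSfin).symm
    _ ≤ ENNReal.ofReal (S.toReal + 1) := ENNReal.ofReal_le_ofReal (by linarith)
end
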